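/- arXiv:2105.03006 — 4 statements merged into one kernel-verified Lean document; each statement's English description precedes it below -/
import Mathlib

section
/- Let Ĝ on the player set [n]∪{d} be obtained from a simple voting game W on [n] by adding a dummy voter d, i.e. the winning coalitions of Ĝ are Ŵ = W ∪ {S∪{d} : S∈W}. Then for every player i∈[n] and every S⊆[n], the efficacy scores satisfy: α̂⁺_i(S) = α̂⁺_i(S∪{d}) = α⁺_i(S), α̂⁻_i(S) = α̂⁻_i(S∪{d}) = α⁻_i(S), and α̂_i(S) = α̂_i(S∪{d}) = α_i(S), where α̂ denotes efficacy scores computed in Ĝ and α those computed in W. -/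
open Finset

variable {α : Type*} [Fintype α] [DecidableEq α]

/-- A simple voting game on the player set `α`: a monotone collection of winning
coalitions in which the empty coalition loses and the full coalition wins. -/
def SimpleVotingGame (W : Finset (Finset α)) : Prop :=
  (∀ S T : Finset α, S ∈ W → S ⊆ T → T ∈ W) ∧ (∅ : Finset α) ∉ W ∧ (univ : Finset α) ∈ W

/-- Player `i` is YES-decisive in the division `S`. -/
def YesDecisive (W : Finset (Finset α)) (i : α) (S : Finset α) : Prop :=
  i ∈ S ∧ S ∈ W ∧ S.erase i ∉ W

/-- Player `i` is NO-decisive in the division `S`. -/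
def NoDecisive (W : Finset (Finset α)) (i : α) (S : Finset α) : Prop :=
  i ∉ S ∧ S ∉ W ∧ insert i S ∈ W

/-- The loyal children of a winning division `S`: the winning divisions `S \ {k}`, `k ∈ S`. -/
def LCwin (W : Finset (Finset α)) (S : Finset α) : Finset (Finset α) :=
  (S.image fun k => S.erase k).filter (· ∈ W)

/-- The loyal children of a losing division `S`: the losing divisions `S ∪ {k}`, `k ∉ S`. -/
def LCloss (W : Finset (Finset α)) (S : Finset α) : Finset (Finset α) :=
  (Sᶜ.image fun k => insert k S).filter (· ∉ W)

/-- The YES-efficacy score `α⁺_i(S)`: `1` if `i` is YES-decisive in `S`, `0` if `S` is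
losing or `i ∉ S`, and otherwise the arithmetic mean of `α⁺_i` over the loyal children. -/
noncomputable def alphaPlus (W : Finset (Finset α)) (i : α) (S : Finset α) : ℝ :=
  if i ∈ S ∧ S ∈ W ∧ S.erase i ∉ W then 1
  else if S ∉ W ∨ i ∉ S then 0
  else (∑ T ∈ (LCwin W S).attach, alphaPlus W i T.1) / (LCwin W S).card
termination_by S.card
decreasing_by
  obtain ⟨T, hT⟩ := T
  simp only [LCwin, Finset.mem_filter, Finset.mem_image] at hT
  obtain ⟨⟨k, hk, rfl⟩, -⟩ := hT
  simpa using Finset.card_erase_lt_of_mem hk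

/-- The NO-efficacy score `α⁻_i(S)`: `1` if `i` is NO-decisive in `S`, `0` if `S` is
winning or `i ∈ S`, and otherwise the arithmetic mean of `α⁻_i` over the loyal children. -/
noncomputable def alphaMinus (W : Finset (Finset α)) (i : α) (S : Finset α) : ℝ :=
  if i ∉ S ∧ S ∉ W ∧ insert i S ∈ W then 1
  else if S ∈ W ∨ i ∈ S then 0
  else (∑ T ∈ (LCloss W S).attach, alphaMinus W i T.1) / (LCloss W S).card
termination_by Sᶜ.card
decreasing_by
  obtain ⟨T, hT⟩ := T
  simp only [LCloss, Finset.mem_filter, Finset.mem_image] at hT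
  obtain ⟨⟨k, hk, rfl⟩, -⟩ := hT
  rw [Finset.compl_insert]
  exact Finset.card_erase_lt_of_mem hk

/-- The efficacy score `α_i(S) = α⁺_i(S) + α⁻_i(S)`. -/
noncomputable def alphaScore (W : Finset (Finset α)) (i : α) (S : Finset α) : ℝ :=
  alphaPlus W i S + alphaMinus W i S

/-- The Recursive Measure of YES-voting power (a priori, equiprobable divisions). -/
noncomputable def RMplus (W : Finset (Finset α)) (i : α) : ℝ :=
  (1 / 2 ^ Fintype.card α) * ∑ S : Finset α, alphaPlus W i S

/-- The Recursive Measure of NO-voting power (a priori, equiprobable divisions). -/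
noncomputable def RMminus (W : Finset (Finset α)) (i : α) : ℝ :=
  (1 / 2 ^ Fintype.card α) * ∑ S : Finset α, alphaMinus W i S

/-- The Recursive Measure of voting power of player `i` (a priori):
`RM_i = 2^{-m} · Σ_S α_i(S)` where `m` is the number of players. -/
noncomputable def RM (W : Finset (Finset α)) (i : α) : ℝ :=
  (1 / 2 ^ Fintype.card α) * ∑ S : Finset α, alphaScore W i S

/-- `d` is a dummy voter: `d` is decisive in no division. -/
def IsDummy (W : Finset (Finset α)) (d : α) : Prop :=
  ∀ S : Finset α, d ∉ S → (insert d S ∈ W ↔ S ∈ W)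

/-- Player `j` weakly dominates player `i`. -/
def WeaklyDominates (W : Finset (Finset α)) (j i : α) : Prop :=
  ∀ S : Finset α, i ∉ S → j ∉ S → insert i S ∈ W → insert j S ∈ W

/-- `What` is the game obtained from `W` by player `j` donating its vote to player `i`. -/
def Donation (W What : Finset (Finset α)) (i j : α) : Prop :=
  ∀ S : Finset α, i ∉ S → j ∉ S →
    (insert i (insert j S) ∈ What ↔ insert i (insert j S) ∈ W) ∧
    (insert i S ∈ What ↔ insert i (insert j S) ∈ W) ∧
    (insert j S ∈ What ↔ S ∈ W) ∧
    (S ∈ What ↔ S ∈ W)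

/-- `What` is obtained from `W` by inducing a (weak, symmetric) quarrel between `i` and `j`. -/
def Quarrel (W What : Finset (Finset α)) (i j : α) : Prop :=
  ∀ S : Finset α, i ∉ S → j ∉ S →
    (insert i (insert j S) ∈ What ↔ (insert i S ∈ W ∨ insert j S ∈ W)) ∧
    (S ∈ What ↔ (insert i S ∈ W ∧ insert j S ∈ W)) ∧
    (insert i S ∈ What ↔ insert i S ∈ W) ∧
    (insert j S ∈ What ↔ insert j S ∈ W)

/-- The voting-independent (product) probability of a division `S`, given the
individual YES-vote probabilities `p`. -/
noncomputable def prodDist (p : α → ℝ) (S : Finset α) : ℝ :=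
  (∏ k ∈ S, p k) * ∏ k ∈ Sᶜ, (1 - p k)

/-- The generalized Recursive Measure of YES-voting power under a
voting-independent probability distribution with vote probabilities `p`. -/
noncomputable def RMplusP (W : Finset (Finset α)) (p : α → ℝ) (i : α) : ℝ :=
  ∑ S : Finset α, alphaPlus W i S * prodDist p S

/-- The generalized Recursive Measure of NO-voting power under a
voting-independent probability distribution with vote probabilities `p`. -/
noncomputable def RMminusP (W : Finset (Finset α)) (p : α → ℝ) (i : α) : ℝ :=
  ∑ S : Finset α, alphaMinus W i S * prodDist p S

section DummyAux

variable {n : ℕ} {W : Finset (Finset (Fin n))} {What : Finset (Finset (Option (Fin n)))}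

private lemma image_some_inj : Function.Injective (fun S : Finset (Fin n) => S.image some) :=
  Finset.image_injective (Option.some_injective _)

private lemma g_inj :
    Function.Injective (fun S : Finset (Fin n) => insert none (S.image some)) := by
  intro S T h
  have h0 : (insert none (S.image some) : Finset (Option (Fin n)))
      = insert none (T.image some) := h
  have h' : ((insert none (S.image some)).erase none : Finset (Option (Fin n)))
      = (insert none (T.image some)).erase none := by rw [h0]
  rw [Finset.erase_insert (by simp), Finset.erase_insert (by simp)] at h'
  exact image_some_inj h'

private lemma mem_f
    (hWhat : What =
      W.image (fun S => S.image some) ∪ W.image (fun S => insert none (S.image some)))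
    (S : Finset (Fin n)) : S.image some ∈ What ↔ S ∈ W := by
  subst hWhat
  simp only [Finset.mem_union, Finset.mem_image]
  constructor
  · rintro (⟨T, hT, h⟩ | ⟨T, hT, h⟩)
    · rwa [← image_some_inj h]
    · exfalso
      have : (none : Option (Fin n)) ∈ S.image some := h ▸ Finset.mem_insert_self none _
      simp at this
  · intro h; exact Or.inl ⟨S, h, rfl⟩

private lemma mem_g
    (hWhat : What =
      W.image (fun S => S.image some) ∪ W.image (fun S => insert none (S.image some)))
    (S : Finset (Fin n)) : insert none (S.image some) ∈ What ↔ S ∈ W := by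
  subst hWhat
  simp only [Finset.mem_union, Finset.mem_image]
  constructor
  · rintro (⟨T, hT, h⟩ | ⟨T, hT, h⟩)
    · exfalso
      have : (none : Option (Fin n)) ∈ T.image some := by rw [h]; exact Finset.mem_insert_self _ _
      simp at this
    · rwa [← g_inj h]
  · intro h; exact Or.inr ⟨S, h, rfl⟩

private lemma erase_f (S : Finset (Fin n)) (i : Fin n) :
    (S.image some).erase (some i) = (S.erase i).image some :=
  (Finset.image_erase (Option.some_injective _) S i).symm

private lemma erase_g (S : Finset (Fin n)) (i : Fin n) :
    (insert none (S.image some)).erase (some i)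
      = insert none ((S.erase i).image some) := by
  rw [Finset.erase_insert_of_ne (by simp), erase_f]

private lemma insert_f (S : Finset (Fin n)) (i : Fin n) :
    insert (some i) (S.image some) = (insert i S).image some :=
  (Finset.image_insert _ _ _).symm

private lemma insert_g (S : Finset (Fin n)) (i : Fin n) :
    insert (some i) (insert none (S.image some))
      = insert none ((insert i S).image some) := by
  rw [Finset.insert_comm, insert_f]

private lemma compl_f (S : Finset (Fin n)) :
    (S.image some)ᶜ = insert none (Sᶜ.image some) := by
  ext x; cases x <;> simp

private lemma compl_g (S : Finset (Fin n)) :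
    (insert none (S.image some))ᶜ = Sᶜ.image some := by
  ext x; cases x <;> simp

private lemma LCwin_f
    (hWhat : What =
      W.image (fun S => S.image some) ∪ W.image (fun S => insert none (S.image some)))
    (S : Finset (Fin n)) :
    LCwin What (S.image some) = (LCwin W S).image (fun T => T.image some) := by
  ext T
  simp only [LCwin, Finset.mem_filter, Finset.mem_image]
  constructor
  · rintro ⟨⟨k, hk, rfl⟩, hT⟩
    obtain ⟨j, hj, rfl⟩ := hk
    rw [erase_f, mem_f hWhat] at hT
    exact ⟨S.erase j, ⟨⟨j, hj, rfl⟩, hT⟩, (erase_f S j).symm⟩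
  · rintro ⟨U, ⟨⟨j, hj, rfl⟩, hU⟩, rfl⟩
    refine ⟨⟨some j, ⟨j, hj, rfl⟩, (erase_f S j)⟩, ?_⟩
    rw [mem_f hWhat]; exact hU

private lemma LCwin_g
    (hWhat : What =
      W.image (fun S => S.image some) ∪ W.image (fun S => insert none (S.image some)))
    (S : Finset (Fin n)) (hS : S ∈ W) :
    LCwin What (insert none (S.image some))
      = insert (S.image some)
          ((LCwin W S).image (fun T => insert none (T.image some))) := by
  ext T
  simp only [LCwin, Finset.mem_filter, Finset.mem_image, Finset.mem_insert]
  constructor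
  · rintro ⟨⟨k, hk, rfl⟩, hT⟩
    rcases k with _ | j
    · left
      rw [Finset.erase_insert (by simp)]
    · right
      rcases hk with h | ⟨j', hj, h⟩
      · exact absurd h (by simp)
      injection h with h2
      subst h2
      rw [erase_g, mem_g hWhat] at hT
      exact ⟨S.erase j', ⟨⟨j', hj, rfl⟩, hT⟩, (erase_g S j').symm⟩
  · rintro (rfl | ⟨U, ⟨⟨j, hj, rfl⟩, hU⟩, rfl⟩)
    · exact ⟨⟨none, Or.inl rfl, Finset.erase_insert (by simp)⟩,
        (mem_f hWhat S).mpr hS⟩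
    · refine ⟨⟨some j, Or.inr ⟨j, hj, rfl⟩, erase_g S j⟩, ?_⟩
      rw [mem_g hWhat]; exact hU

private lemma LCloss_g
    (hWhat : What =
      W.image (fun S => S.image some) ∪ W.image (fun S => insert none (S.image some)))
    (S : Finset (Fin n)) :
    LCloss What (insert none (S.image some))
      = (LCloss W S).image (fun T => insert none (T.image some)) := by
  ext T
  simp only [LCloss, Finset.mem_filter, Finset.mem_image, compl_g]
  constructor
  · rintro ⟨⟨k, hk, rfl⟩, hT⟩
    obtain ⟨j, hj, rfl⟩ := hk
    rw [insert_g, mem_g hWhat] at hT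
    exact ⟨insert j S, ⟨⟨j, hj, rfl⟩, hT⟩, (insert_g S j).symm⟩
  · rintro ⟨U, ⟨⟨j, hj, rfl⟩, hU⟩, rfl⟩
    refine ⟨⟨some j, ⟨j, hj, rfl⟩, insert_g S j⟩, ?_⟩
    rw [mem_g hWhat]; exact hU

private lemma LCloss_f
    (hWhat : What =
      W.image (fun S => S.image some) ∪ W.image (fun S => insert none (S.image some)))
    (S : Finset (Fin n)) (hS : S ∉ W) :
    LCloss What (S.image some)
      = insert (insert none (S.image some))
          ((LCloss W S).image (fun T => T.image some)) := by
  ext T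
  simp only [LCloss, Finset.mem_filter, Finset.mem_image, Finset.mem_insert, compl_f]
  constructor
  · rintro ⟨⟨k, hk, rfl⟩, hT⟩
    rcases k with _ | j
    · left; rfl
    · right
      rcases hk with h | ⟨j', hj, h⟩
      · exact absurd h (by simp)
      injection h with h2
      subst h2
      rw [insert_f, mem_f hWhat] at hT
      exact ⟨insert j' S, ⟨⟨j', hj, rfl⟩, hT⟩, (insert_f S j').symm⟩
  · rintro (rfl | ⟨U, ⟨⟨j, hj, rfl⟩, hU⟩, rfl⟩)
    · refine ⟨⟨none, Or.inl rfl, rfl⟩, ?_⟩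
      rw [mem_g hWhat]; exact hS
    · refine ⟨⟨some j, Or.inr ⟨j, hj, rfl⟩, insert_f S j⟩, ?_⟩
      rw [mem_f hWhat]; exact hU


private lemma alphaPlus_dummy
    (hWhat : What =
      W.image (fun S => S.image some) ∪ W.image (fun S => insert none (S.image some)))
    (i : Fin n) :
    ∀ m : ℕ, ∀ S : Finset (Fin n), S.card = m →
      alphaPlus What (some i) (S.image some) = alphaPlus W i S ∧
      alphaPlus What (some i) (insert none (S.image some)) = alphaPlus W i S := by
  intro m
  induction m using Nat.strong_induction_on with
  | _ m IH =>
  rintro S rfl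
  have hIHc : ∀ T ∈ LCwin W S,
      alphaPlus What (some i) (T.image some) = alphaPlus W i T ∧
      alphaPlus What (some i) (insert none (T.image some)) = alphaPlus W i T := by
    intro T hT
    simp only [LCwin, Finset.mem_filter, Finset.mem_image] at hT
    obtain ⟨⟨k, hk, rfl⟩, -⟩ := hT
    exact IH _ (Finset.card_erase_lt_of_mem hk) _ rfl
  have hmemi : some i ∈ S.image some ↔ i ∈ S := by simp
  have hmemi' : some i ∈ insert none (S.image some) ↔ i ∈ S := by simp
  by_cases hd : i ∈ S ∧ S ∈ W ∧ S.erase i ∉ W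
  · have hd1 : some i ∈ S.image some ∧ S.image some ∈ What ∧
        (S.image some).erase (some i) ∉ What := by
      rw [hmemi, erase_f, mem_f hWhat, mem_f hWhat]; exact hd
    have hd2 : some i ∈ insert none (S.image some) ∧ insert none (S.image some) ∈ What ∧
        (insert none (S.image some)).erase (some i) ∉ What := by
      rw [hmemi', erase_g, mem_g hWhat, mem_g hWhat]; exact hd
    constructor
    · rw [alphaPlus, if_pos hd1, alphaPlus, if_pos hd]
    · rw [alphaPlus, if_pos hd2, alphaPlus, if_pos hd]
  · have hnd1 : ¬(some i ∈ S.image some ∧ S.image some ∈ What ∧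
        (S.image some).erase (some i) ∉ What) := by
      rw [hmemi, erase_f, mem_f hWhat, mem_f hWhat]; exact hd
    have hnd2 : ¬(some i ∈ insert none (S.image some) ∧ insert none (S.image some) ∈ What ∧
        (insert none (S.image some)).erase (some i) ∉ What) := by
      rw [hmemi', erase_g, mem_g hWhat, mem_g hWhat]; exact hd
    by_cases h0 : S ∉ W ∨ i ∉ S
    · have h01 : S.image some ∉ What ∨ some i ∉ S.image some := by
        rw [hmemi, mem_f hWhat]; exact h0
      have h02 : insert none (S.image some) ∉ What ∨ some i ∉ insert none (S.image some) := by
        rw [hmemi', mem_g hWhat]; exact h0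
      constructor
      · rw [alphaPlus, if_neg hnd1, if_pos h01, alphaPlus, if_neg hd, if_pos h0]
      · rw [alphaPlus, if_neg hnd2, if_pos h02, alphaPlus, if_neg hd, if_pos h0]
    · have h01 : ¬(S.image some ∉ What ∨ some i ∉ S.image some) := by
        rw [hmemi, mem_f hWhat]; exact h0
      have h02 : ¬(insert none (S.image some) ∉ What ∨ some i ∉ insert none (S.image some)) := by
        rw [hmemi', mem_g hWhat]; exact h0
      push_neg at h0
      obtain ⟨hSW, hiS⟩ := h0
      have part1 : alphaPlus What (some i) (S.image some) = alphaPlus W i S := by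
        rw [alphaPlus, if_neg hnd1, if_neg h01]
        conv_rhs => rw [alphaPlus]
        rw [if_neg hd, if_neg (by push_neg; exact ⟨hSW, hiS⟩ : ¬(S ∉ W ∨ i ∉ S)),
          Finset.sum_attach, Finset.sum_attach, LCwin_f hWhat,
          Finset.sum_image (fun x _ y _ h => image_some_inj h),
          Finset.card_image_of_injective _ image_some_inj,
          Finset.sum_congr rfl (fun T hT => (hIHc T hT).1)]
      refine ⟨part1, ?_⟩
      have hiW : S.erase i ∈ W := by
        by_contra hcon
        exact hd ⟨hiS, hSW, hcon⟩
      have hmpos : 0 < (LCwin W S).card := by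
        refine Finset.card_pos.mpr ⟨S.erase i, ?_⟩
        simp only [LCwin, Finset.mem_filter, Finset.mem_image]
        exact ⟨⟨i, hiS, rfl⟩, hiW⟩
      have key : alphaPlus W i S
          = (∑ T ∈ LCwin W S, alphaPlus W i T) / (LCwin W S).card := by
        conv_lhs => rw [alphaPlus]
        rw [if_neg hd, if_neg (by push_neg; exact ⟨hSW, hiS⟩ : ¬(S ∉ W ∨ i ∉ S)),
          Finset.sum_attach]
      have hfnotin : S.image some ∉
          (LCwin W S).image (fun T => insert none (T.image some)) := by
        intro hmem
        obtain ⟨T, hT, hEq⟩ := Finset.mem_image.mp hmem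
        have : (none : Option (Fin n)) ∈ S.image some := hEq ▸ Finset.mem_insert_self none _
        simp at this
      rw [alphaPlus, if_neg hnd2, if_neg h02, Finset.sum_attach, LCwin_g hWhat S hSW,
        Finset.sum_insert hfnotin, Finset.card_insert_of_notMem hfnotin,
        Finset.sum_image (fun x _ y _ h => g_inj h),
        Finset.card_image_of_injective _ g_inj, part1,
        Finset.sum_congr rfl (fun T hT => (hIHc T hT).2), key]
      have hc : ((LCwin W S).card : ℝ) ≠ 0 := by
        exact_mod_cast hmpos.ne'
      push_cast
      field_simp
      ring

private lemma alphaMinus_dummy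
    (hWhat : What =
      W.image (fun S => S.image some) ∪ W.image (fun S => insert none (S.image some)))
    (i : Fin n) :
    ∀ m : ℕ, ∀ S : Finset (Fin n), Sᶜ.card = m →
      alphaMinus What (some i) (S.image some) = alphaMinus W i S ∧
      alphaMinus What (some i) (insert none (S.image some)) = alphaMinus W i S := by
  intro m
  induction m using Nat.strong_induction_on with
  | _ m IH =>
  rintro S rfl
  have hIHc : ∀ T ∈ LCloss W S,
      alphaMinus What (some i) (T.image some) = alphaMinus W i T ∧
      alphaMinus What (some i) (insert none (T.image some)) = alphaMinus W i T := by
    intro T hT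
    simp only [LCloss, Finset.mem_filter, Finset.mem_image] at hT
    obtain ⟨⟨k, hk, rfl⟩, -⟩ := hT
    refine IH _ ?_ _ rfl
    rw [Finset.compl_insert]
    exact Finset.card_erase_lt_of_mem hk
  have hmemi : some i ∈ S.image some ↔ i ∈ S := by simp
  have hmemi' : some i ∈ insert none (S.image some) ↔ i ∈ S := by simp
  by_cases hd : i ∉ S ∧ S ∉ W ∧ insert i S ∈ W
  · have hd1 : some i ∉ S.image some ∧ S.image some ∉ What ∧
        insert (some i) (S.image some) ∈ What := by
      rw [hmemi, insert_f, mem_f hWhat, mem_f hWhat]; exact hd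
    have hd2 : some i ∉ insert none (S.image some) ∧ insert none (S.image some) ∉ What ∧
        insert (some i) (insert none (S.image some)) ∈ What := by
      rw [hmemi', insert_g, mem_g hWhat, mem_g hWhat]; exact hd
    constructor
    · rw [alphaMinus, if_pos hd1, alphaMinus, if_pos hd]
    · rw [alphaMinus, if_pos hd2, alphaMinus, if_pos hd]
  · have hnd1 : ¬(some i ∉ S.image some ∧ S.image some ∉ What ∧
        insert (some i) (S.image some) ∈ What) := by
      rw [hmemi, insert_f, mem_f hWhat, mem_f hWhat]; exact hd
    have hnd2 : ¬(some i ∉ insert none (S.image some) ∧ insert none (S.image some) ∉ What ∧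
        insert (some i) (insert none (S.image some)) ∈ What) := by
      rw [hmemi', insert_g, mem_g hWhat, mem_g hWhat]; exact hd
    by_cases h0 : S ∈ W ∨ i ∈ S
    · have h01 : S.image some ∈ What ∨ some i ∈ S.image some := by
        rw [hmemi, mem_f hWhat]; exact h0
      have h02 : insert none (S.image some) ∈ What ∨ some i ∈ insert none (S.image some) := by
        rw [hmemi', mem_g hWhat]; exact h0
      constructor
      · rw [alphaMinus, if_neg hnd1, if_pos h01, alphaMinus, if_neg hd, if_pos h0]
      · rw [alphaMinus, if_neg hnd2, if_pos h02, alphaMinus, if_neg hd, if_pos h0]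
    · have h01 : ¬(S.image some ∈ What ∨ some i ∈ S.image some) := by
        rw [hmemi, mem_f hWhat]; exact h0
      have h02 : ¬(insert none (S.image some) ∈ What ∨ some i ∈ insert none (S.image some)) := by
        rw [hmemi', mem_g hWhat]; exact h0
      push_neg at h0
      obtain ⟨hSW, hiS⟩ := h0
      have partg : alphaMinus What (some i) (insert none (S.image some)) = alphaMinus W i S := by
        rw [alphaMinus, if_neg hnd2, if_neg h02]
        conv_rhs => rw [alphaMinus]
        rw [if_neg hd, if_neg (by push_neg; exact ⟨hSW, hiS⟩ : ¬(S ∈ W ∨ i ∈ S)),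
          Finset.sum_attach, Finset.sum_attach, LCloss_g hWhat,
          Finset.sum_image (fun x _ y _ h => g_inj h),
          Finset.card_image_of_injective _ g_inj,
          Finset.sum_congr rfl (fun T hT => (hIHc T hT).2)]
      refine ⟨?_, partg⟩
      have hiW : insert i S ∉ W := by
        by_contra hcon
        exact hd ⟨hiS, hSW, hcon⟩
      have hmpos : 0 < (LCloss W S).card := by
        refine Finset.card_pos.mpr ⟨insert i S, ?_⟩
        simp only [LCloss, Finset.mem_filter, Finset.mem_image]
        exact ⟨⟨i, Finset.mem_compl.mpr hiS, rfl⟩, hiW⟩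
      have key : alphaMinus W i S
          = (∑ T ∈ LCloss W S, alphaMinus W i T) / (LCloss W S).card := by
        conv_lhs => rw [alphaMinus]
        rw [if_neg hd, if_neg (by push_neg; exact ⟨hSW, hiS⟩ : ¬(S ∈ W ∨ i ∈ S)),
          Finset.sum_attach]
      have hgnotin : insert none (S.image some) ∉
          (LCloss W S).image (fun T => T.image some) := by
        intro hmem
        obtain ⟨T, hT, hEq⟩ := Finset.mem_image.mp hmem
        have : (none : Option (Fin n)) ∈ T.image some := by
          rw [hEq]; exact Finset.mem_insert_self none _
        simp at this
      rw [alphaMinus, if_neg hnd1, if_neg h01, Finset.sum_attach, LCloss_f hWhat S hSW,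
        Finset.sum_insert hgnotin, Finset.card_insert_of_notMem hgnotin,
        Finset.sum_image (fun x _ y _ h => image_some_inj h),
        Finset.card_image_of_injective _ image_some_inj, partg,
        Finset.sum_congr rfl (fun T hT => (hIHc T hT).1), key]
      have hc : ((LCloss W S).card : ℝ) ≠ 0 := by
        exact_mod_cast hmpos.ne'
      push_cast
      field_simp
      ring

end DummyAux
/-- adding a dummy voter leaves all efficacy scores unchanged. -/
theorem dummy_efficacy_scores {n : ℕ} (W : Finset (Finset (Fin n)))
    (hW : SimpleVotingGame W)
    (What : Finset (Finset (Option (Fin n))))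
    (hWhat : What =
      W.image (fun S => S.image some) ∪ W.image (fun S => insert none (S.image some)))
    (i : Fin n) (S : Finset (Fin n)) :
    (alphaPlus What (some i) (S.image some) = alphaPlus W i S ∧
      alphaPlus What (some i) (insert none (S.image some)) = alphaPlus W i S) ∧
    (alphaMinus What (some i) (S.image some) = alphaMinus W i S ∧
      alphaMinus What (some i) (insert none (S.image some)) = alphaMinus W i S) ∧
    (alphaScore What (some i) (S.image some) = alphaScore W i S ∧
      alphaScore What (some i) (insert none (S.image some)) = alphaScore W i S) := by
  obtain ⟨hp1, hp2⟩ := alphaPlus_dummy hWhat i S.card S rfl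
  obtain ⟨hm1, hm2⟩ := alphaMinus_dummy hWhat i Sᶜ.card S rfl
  refine ⟨⟨hp1, hp2⟩, ⟨hm1, hm2⟩, ?_, ?_⟩ <;> simp [alphaScore, hp1, hp2, hm1, hm2]
end

section
/- RM satisfies the dummy postulates: in a simple voting game W on [n], (dum-1) if player d is a dummy voter then RM_d = 0; (dum-2) conversely, if RM_i = 0 then player i is a dummy voter; and (dum-3) if Ĝ on [n]∪{d} is obtained from W by adding a dummy voter d (winning coalitions Ŵ = W ∪ {S∪{d} : S∈W}), then for every player i∈[n], the Recursive Measure of i computed in Ĝ (with the factor 2^{−(n+1)}) equals the Recursive Measure of i computed in W (with the factor 2^{−n}). -/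
open Finset

variable {α : Type*} [Fintype α] [DecidableEq α]

set_option linter.unusedSectionVars false
variable {α : Type*} [Fintype α] [DecidableEq α]

lemma alphaPlus_nonneg (W : Finset (Finset α)) (i : α) (S : Finset α) :
    0 ≤ alphaPlus W i S := by
  induction S using Finset.strongInductionOn with
  | _ S ih =>
    rw [alphaPlus]
    split
    · norm_num
    split
    · norm_num
    · apply div_nonneg _ (by positivity)
      apply Finset.sum_nonneg
      rintro ⟨T, hT⟩ -
      simp only [LCwin, Finset.mem_filter, Finset.mem_image] at hT
      obtain ⟨⟨k, hk, rfl⟩, -⟩ := hT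
      exact ih _ (Finset.erase_ssubset hk)

lemma alphaMinus_nonneg (W : Finset (Finset α)) (i : α) (S : Finset α) :
    0 ≤ alphaMinus W i S := by
  suffices h : ∀ m : ℕ, ∀ S : Finset α, Sᶜ.card ≤ m → 0 ≤ alphaMinus W i S from
    h _ S le_rfl
  intro m
  induction m with
  | zero =>
    intro S hS
    rw [alphaMinus]
    split
    · norm_num
    split
    · norm_num
    · rename_i h1 h2
      exfalso
      push_neg at h2
      obtain ⟨hSW, hiS⟩ := h2
      have : i ∈ Sᶜ := Finset.mem_compl.2 hiS
      have := Finset.card_pos.2 ⟨i, this⟩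
      omega
  | succ m ih =>
    intro S hS
    rw [alphaMinus]
    split
    · norm_num
    split
    · norm_num
    · apply div_nonneg _ (by positivity)
      apply Finset.sum_nonneg
      rintro ⟨T, hT⟩ -
      simp only [LCloss, Finset.mem_filter, Finset.mem_image] at hT
      obtain ⟨⟨k, hk, rfl⟩, -⟩ := hT
      apply ih
      rw [Finset.compl_insert]
      have := Finset.card_erase_lt_of_mem hk
      omega
lemma alphaPlus_dummy_s2 (W : Finset (Finset α)) (d : α) (hd : IsDummy W d) (S : Finset α) :
    alphaPlus W d S = 0 := by
  induction S using Finset.strongInductionOn with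
  | _ S ih =>
    rw [alphaPlus]
    split
    · rename_i h
      obtain ⟨hdS, hSW, hE⟩ := h
      exfalso
      apply hE
      have := (hd (S.erase d) (Finset.notMem_erase d S)).1
      rw [Finset.insert_erase hdS] at this
      exact this hSW
    split
    · rfl
    · rw [Finset.sum_eq_zero, zero_div]
      rintro ⟨T, hT⟩ -
      simp only [LCwin, Finset.mem_filter, Finset.mem_image] at hT
      obtain ⟨⟨k, hk, rfl⟩, -⟩ := hT
      exact ih _ (Finset.erase_ssubset hk)

lemma alphaMinus_dummy_s2 (W : Finset (Finset α)) (d : α) (hd : IsDummy W d) (S : Finset α) :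
    alphaMinus W d S = 0 := by
  suffices h : ∀ m : ℕ, ∀ S : Finset α, Sᶜ.card ≤ m → alphaMinus W d S = 0 from
    h _ S le_rfl
  intro m
  induction m with
  | zero =>
    intro S hS
    rw [alphaMinus]
    split
    · rename_i h
      exact absurd ((hd S h.1).1 h.2.2) h.2.1
    split
    · rfl
    · rename_i h1 h2
      exfalso
      push_neg at h2
      have : d ∈ Sᶜ := Finset.mem_compl.2 h2.2
      have := Finset.card_pos.2 ⟨d, this⟩
      omega
  | succ m ih =>
    intro S hS
    rw [alphaMinus]
    split
    · rename_i h
      exact absurd ((hd S h.1).1 h.2.2) h.2.1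
    split
    · rfl
    · rw [Finset.sum_eq_zero, zero_div]
      rintro ⟨T, hT⟩ -
      simp only [LCloss, Finset.mem_filter, Finset.mem_image] at hT
      obtain ⟨⟨k, hk, rfl⟩, -⟩ := hT
      apply ih
      rw [Finset.compl_insert]
      have := Finset.card_erase_lt_of_mem hk
      omega
lemma dum1 (W : Finset (Finset α)) (d : α) (hd : IsDummy W d) : RM W d = 0 := by
  unfold RM alphaScore
  rw [Finset.sum_eq_zero, mul_zero]
  intro S _
  rw [alphaPlus_dummy_s2 W d hd, alphaMinus_dummy_s2 W d hd, add_zero]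

lemma dum2 (W : Finset (Finset α)) (hW : SimpleVotingGame W) (i : α)
    (h : RM W i = 0) : IsDummy W i := by
  have hsum : ∀ S : Finset α, alphaScore W i S = 0 := by
    unfold RM at h
    have hS0 : ∑ S : Finset α, alphaScore W i S = 0 := by
      rcases mul_eq_zero.1 h with h' | h'
      · exact absurd h' (by positivity)
      · exact h'
    intro S
    refine (Finset.sum_eq_zero_iff_of_nonneg ?_).1 hS0 S (Finset.mem_univ S)
    intro T _
    exact add_nonneg (alphaPlus_nonneg W i T) (alphaMinus_nonneg W i T)
  intro S hiS
  constructor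
  · intro hins
    by_contra hS
    have h1 : alphaMinus W i S = 1 := by
      rw [alphaMinus]
      simp [hiS, hS, hins]
    have h0 := hsum S
    unfold alphaScore at h0
    have := alphaPlus_nonneg W i S
    rw [h1] at h0
    linarith
  · intro hS
    exact hW.1 S _ hS (Finset.subset_insert _ _)
section Emb
variable {β : Type*} [Fintype β] [DecidableEq β]

/-- Embed a coalition of `β` into `Option β`. -/
def emb (S : Finset β) : Finset (Option β) := S.image some

lemma emb_injective : Function.Injective (emb (β := β)) :=
  Finset.image_injective (Option.some_injective _)

lemma none_not_mem_emb (S : Finset β) : none ∉ emb S := by simp [emb]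

lemma mem_emb {S : Finset β} {k : β} : some k ∈ emb S ↔ k ∈ S := by simp [emb]

lemma emb_erase (S : Finset β) (k : β) : emb (S.erase k) = (emb S).erase (some k) := by
  simp [emb, Finset.image_erase (Option.some_injective _)]

lemma emb_insert (S : Finset β) (k : β) : emb (insert k S) = insert (some k) (emb S) := by
  simp [emb, Finset.image_insert]

lemma compl_emb (S : Finset β) : (emb S)ᶜ = insert none (emb Sᶜ) := by
  ext x
  cases x <;> simp [mem_emb, none_not_mem_emb]

lemma compl_insert_none_emb (S : Finset β) : (insert none (emb S))ᶜ = emb Sᶜ := by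
  rw [Finset.compl_insert, compl_emb, Finset.erase_insert (none_not_mem_emb _)]

variable (W : Finset (Finset β)) (What : Finset (Finset (Option β)))
variable (hWhat : What =
    W.image (fun S => S.image some) ∪ W.image (fun S => insert none (S.image some)))

include hWhat

lemma mem_what_emb (S : Finset β) : emb S ∈ What ↔ S ∈ W := by
  subst hWhat
  simp only [Finset.mem_union, Finset.mem_image]
  constructor
  · rintro (⟨T, hT, hTS⟩ | ⟨T, hT, hTS⟩)
    · rwa [← emb_injective hTS]
    · exfalso
      apply none_not_mem_emb S
      rw [← hTS]
      exact Finset.mem_insert_self _ _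
  · intro hS
    exact Or.inl ⟨S, hS, rfl⟩

lemma mem_what_insert_none (S : Finset β) : insert none (emb S) ∈ What ↔ S ∈ W := by
  subst hWhat
  simp only [Finset.mem_union, Finset.mem_image]
  constructor
  · rintro (⟨T, hT, hTS⟩ | ⟨T, hT, hTS⟩)
    · exfalso
      apply none_not_mem_emb T
      show none ∈ T.image some
      rw [hTS]
      exact Finset.mem_insert_self _ _
    · have : emb T = emb S := by
        have := congrArg (fun X => Finset.erase X none) hTS
        simpa [Finset.erase_insert (none_not_mem_emb _), emb] using this
      rwa [← emb_injective this]
  · intro hS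
    exact Or.inr ⟨S, hS, rfl⟩

end Emb
section LC
variable {β : Type*} [Fintype β] [DecidableEq β]
variable (W : Finset (Finset β)) (What : Finset (Finset (Option β)))
variable (hWhat : What =
    W.image (fun S => S.image some) ∪ W.image (fun S => insert none (S.image some)))

include hWhat

lemma LCwin_emb (S : Finset β) : LCwin What (emb S) = (LCwin W S).image emb := by
  ext T'
  simp only [LCwin, Finset.mem_filter, Finset.mem_image]
  constructor
  · rintro ⟨⟨x, hx, rfl⟩, hW'⟩
    obtain ⟨k, hk, rfl⟩ := Finset.mem_image.1 hx
    rw [← emb_erase] at hW' ⊢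
    rw [mem_what_emb W What hWhat] at hW'
    exact ⟨S.erase k, ⟨⟨k, hk, rfl⟩, hW'⟩, rfl⟩
  · rintro ⟨T, ⟨⟨k, hk, rfl⟩, hTW⟩, rfl⟩
    refine ⟨⟨some k, mem_emb.2 hk, (emb_erase S k).symm⟩, ?_⟩
    exact (mem_what_emb W What hWhat _).2 hTW

lemma LCwin_insert_none (S : Finset β) (hS : S ∈ W) :
    LCwin What (insert none (emb S)) =
      insert (emb S) ((LCwin W S).image fun T => insert none (emb T)) := by
  ext T'
  simp only [LCwin, Finset.mem_filter, Finset.mem_image, Finset.mem_insert]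
  constructor
  · rintro ⟨⟨x, hx, rfl⟩, hW'⟩
    rcases hx with rfl | hx'
    · left; exact Finset.erase_insert (none_not_mem_emb S)
    · obtain ⟨k, hk, rfl⟩ := Finset.mem_image.1 hx'
      right
      have he : (insert none (emb S)).erase (some k) = insert none (emb (S.erase k)) := by
        rw [Finset.erase_insert_of_ne (by simp), emb_erase]
      rw [he] at hW' ⊢
      rw [mem_what_insert_none W What hWhat] at hW'
      exact ⟨S.erase k, ⟨⟨k, hk, rfl⟩, hW'⟩, rfl⟩
  · rintro (rfl | ⟨T, ⟨⟨k, hk, rfl⟩, hTW⟩, rfl⟩)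
    · exact ⟨⟨none, Or.inl rfl, Finset.erase_insert (none_not_mem_emb S)⟩,
        (mem_what_emb W What hWhat S).2 hS⟩
    · refine ⟨⟨some k, Or.inr (mem_emb.2 hk), ?_⟩, ?_⟩
      · rw [Finset.erase_insert_of_ne (by simp), emb_erase]
      · exact (mem_what_insert_none W What hWhat _).2 hTW

lemma LCloss_insert_none (S : Finset β) :
    LCloss What (insert none (emb S)) = (LCloss W S).image fun T => insert none (emb T) := by
  ext T'
  simp only [LCloss, Finset.mem_filter, Finset.mem_image]
  constructor
  · rintro ⟨⟨x, hx, rfl⟩, hW'⟩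
    rw [compl_insert_none_emb] at hx
    obtain ⟨k, hk, rfl⟩ := Finset.mem_image.1 hx
    have he : insert (some k) (insert none (emb S)) = insert none (emb (insert k S)) := by
      rw [emb_insert, Finset.insert_comm]
    rw [he] at hW' ⊢
    rw [mem_what_insert_none W What hWhat] at hW'
    exact ⟨insert k S, ⟨⟨k, hk, rfl⟩, hW'⟩, rfl⟩
  · rintro ⟨T, ⟨⟨k, hk, rfl⟩, hTW⟩, rfl⟩
    refine ⟨⟨some k, ?_, ?_⟩, ?_⟩
    · rw [compl_insert_none_emb]; exact mem_emb.2 hk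
    · rw [emb_insert, Finset.insert_comm]
    · rw [mem_what_insert_none W What hWhat]; exact hTW

lemma LCloss_emb (S : Finset β) (hS : S ∉ W) :
    LCloss What (emb S) = insert (insert none (emb S)) ((LCloss W S).image emb) := by
  ext T'
  simp only [LCloss, Finset.mem_filter, Finset.mem_image, Finset.mem_insert]
  constructor
  · rintro ⟨⟨x, hx, rfl⟩, hW'⟩
    rw [compl_emb] at hx
    rcases Finset.mem_insert.1 hx with rfl | hx'
    · left; rfl
    · obtain ⟨k, hk, rfl⟩ := Finset.mem_image.1 hx'
      right
      rw [← emb_insert] at hW' ⊢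
      rw [mem_what_emb W What hWhat] at hW'
      exact ⟨insert k S, ⟨⟨k, hk, rfl⟩, hW'⟩, rfl⟩
  · rintro (rfl | ⟨T, ⟨⟨k, hk, rfl⟩, hTW⟩, rfl⟩)
    · refine ⟨⟨none, ?_, rfl⟩, ?_⟩
      · rw [compl_emb]; exact Finset.mem_insert_self _ _
      · rw [mem_what_insert_none W What hWhat]; exact hS
    · refine ⟨⟨some k, ?_, (emb_insert S k).symm⟩, ?_⟩
      · rw [compl_emb]; exact Finset.mem_insert_of_mem (mem_emb.2 hk)
      · rw [mem_what_emb W What hWhat]; exact hTW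

end LC
section Transfer
variable {β : Type*} [Fintype β] [DecidableEq β]

lemma insert_none_emb_injective :
    Function.Injective (fun T : Finset β => insert none (emb T)) := by
  intro S T h
  apply emb_injective
  have := congrArg (·.erase none) h
  simpa [Finset.erase_insert (none_not_mem_emb _)] using this

lemma emb_not_mem_image_insert_none (S : Finset β) (X : Finset (Finset β)) :
    emb S ∉ X.image (fun T => insert none (emb T)) := by
  intro h
  obtain ⟨T, -, hT⟩ := Finset.mem_image.1 h
  exact none_not_mem_emb S (hT ▸ Finset.mem_insert_self _ _)

lemma insert_none_not_mem_image_emb (S : Finset β) (X : Finset (Finset β)) :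
    insert none (emb S) ∉ X.image emb := by
  intro h
  obtain ⟨T, -, hT⟩ := Finset.mem_image.1 h
  exact none_not_mem_emb T (hT.symm ▸ Finset.mem_insert_self _ _)

variable (W : Finset (Finset β)) (What : Finset (Finset (Option β)))
variable (hWhat : What =
    W.image (fun S => S.image some) ∪ W.image (fun S => insert none (S.image some)))

include hWhat

lemma alphaPlus_emb (i : β) (S : Finset β) :
    alphaPlus What (some i) (emb S) = alphaPlus W i S := by
  induction S using Finset.strongInductionOn with
  | _ S ih =>
    have h1 : (some i ∈ emb S ∧ emb S ∈ What ∧ (emb S).erase (some i) ∉ What) ↔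
        (i ∈ S ∧ S ∈ W ∧ S.erase i ∉ W) := by
      rw [← emb_erase, mem_what_emb W What hWhat, mem_what_emb W What hWhat, mem_emb]
    have h2 : (emb S ∉ What ∨ some i ∉ emb S) ↔ (S ∉ W ∨ i ∉ S) := by
      rw [mem_what_emb W What hWhat, mem_emb]
    by_cases hc1 : i ∈ S ∧ S ∈ W ∧ S.erase i ∉ W
    · rw [alphaPlus, if_pos (h1.2 hc1), alphaPlus, if_pos hc1]
    · by_cases hc2 : S ∉ W ∨ i ∉ S
      · rw [alphaPlus, if_neg (fun h => hc1 (h1.1 h)), if_pos (h2.2 hc2),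
          alphaPlus, if_neg hc1, if_pos hc2]
      · conv_rhs => rw [alphaPlus]
        rw [alphaPlus, if_neg (fun h => hc1 (h1.1 h)), if_neg (fun h => hc2 (h2.1 h)),
          if_neg hc1, if_neg hc2]
        rw [Finset.sum_attach _ (fun T => alphaPlus What (some i) T),
          Finset.sum_attach _ (fun T => alphaPlus W i T),
          LCwin_emb W What hWhat,
          Finset.sum_image (fun x _ y _ h => emb_injective h),
          Finset.card_image_of_injective _ emb_injective]
        congr 1
        apply Finset.sum_congr rfl
        intro T hT
        simp only [LCwin, Finset.mem_filter, Finset.mem_image] at hT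
        obtain ⟨⟨k, hk, rfl⟩, -⟩ := hT
        exact ih _ (Finset.erase_ssubset hk)

lemma alphaPlus_insert_none (i : β) (S : Finset β) :
    alphaPlus What (some i) (insert none (emb S)) = alphaPlus W i S := by
  induction S using Finset.strongInductionOn with
  | _ S ih =>
    have hine : (none : Option β) ≠ some i := by simp
    have herase : (insert none (emb S)).erase (some i) = insert none (emb (S.erase i)) := by
      rw [Finset.erase_insert_of_ne hine, emb_erase]
    have h1 : (some i ∈ insert none (emb S) ∧ insert none (emb S) ∈ What ∧
        (insert none (emb S)).erase (some i) ∉ What) ↔ (i ∈ S ∧ S ∈ W ∧ S.erase i ∉ W) := by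
      rw [herase, mem_what_insert_none W What hWhat, mem_what_insert_none W What hWhat]
      simp [mem_emb]
    have h2 : (insert none (emb S) ∉ What ∨ some i ∉ insert none (emb S)) ↔
        (S ∉ W ∨ i ∉ S) := by
      rw [mem_what_insert_none W What hWhat]
      simp [mem_emb]
    by_cases hc1 : i ∈ S ∧ S ∈ W ∧ S.erase i ∉ W
    · rw [alphaPlus, if_pos (h1.2 hc1), alphaPlus, if_pos hc1]
    · by_cases hc2 : S ∉ W ∨ i ∉ S
      · rw [alphaPlus, if_neg (fun h => hc1 (h1.1 h)), if_pos (h2.2 hc2),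
          alphaPlus, if_neg hc1, if_pos hc2]
      · -- main case
        push_neg at hc2
        obtain ⟨hSW, hiS⟩ := hc2
        have hEW : S.erase i ∈ W := by
          by_contra hEW
          exact hc1 ⟨hiS, hSW, hEW⟩
        have hmem : S.erase i ∈ LCwin W S :=
          Finset.mem_filter.2 ⟨Finset.mem_image.2 ⟨i, hiS, rfl⟩, hEW⟩
        have hm : 0 < (LCwin W S).card := Finset.card_pos.2 ⟨_, hmem⟩
        conv_lhs => rw [alphaPlus]
        rw [if_neg (fun h => hc1 (h1.1 h)),
          if_neg (fun h => (h2.1 h).elim (fun h' => h' hSW) (fun h' => h' hiS))]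
        rw [Finset.sum_attach _ (fun T => alphaPlus What (some i) T),
          LCwin_insert_none W What hWhat S hSW,
          Finset.sum_insert (emb_not_mem_image_insert_none S _),
          Finset.sum_image (fun x _ y _ h => insert_none_emb_injective h),
          Finset.card_insert_of_notMem (emb_not_mem_image_insert_none S _),
          Finset.card_image_of_injective _ insert_none_emb_injective,
          alphaPlus_emb W What hWhat i S]
        have hval : ∑ T ∈ LCwin W S, alphaPlus What (some i) (insert none (emb T)) =
            ∑ T ∈ LCwin W S, alphaPlus W i T := by
          apply Finset.sum_congr rfl
          intro T hT
          simp only [LCwin, Finset.mem_filter, Finset.mem_image] at hT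
          obtain ⟨⟨k, hk, rfl⟩, -⟩ := hT
          exact ih _ (Finset.erase_ssubset hk)
        rw [hval]
        have ha : alphaPlus W i S =
            (∑ T ∈ LCwin W S, alphaPlus W i T) / (LCwin W S).card := by
          rw [alphaPlus, if_neg hc1, if_neg (by push_neg; exact ⟨hSW, hiS⟩),
            Finset.sum_attach _ (fun T => alphaPlus W i T)]
        rw [ha]
        have hmr : (0:ℝ) < (LCwin W S).card := by exact_mod_cast hm
        field_simp
        push_cast
        ring
end Transfer
section Transfer2
variable {β : Type*} [Fintype β] [DecidableEq β]
variable (W : Finset (Finset β)) (What : Finset (Finset (Option β)))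
variable (hWhat : What =
    W.image (fun S => S.image some) ∪ W.image (fun S => insert none (S.image some)))

include hWhat

lemma alphaMinus_insert_none (i : β) (S : Finset β) :
    alphaMinus What (some i) (insert none (emb S)) = alphaMinus W i S := by
  suffices h : ∀ m : ℕ, ∀ S : Finset β, Sᶜ.card ≤ m →
      alphaMinus What (some i) (insert none (emb S)) = alphaMinus W i S from h _ S le_rfl
  intro m
  induction m with
  | zero =>
    intro S hS
    have hinsert : insert (some i) (insert none (emb S)) = insert none (emb (insert i S)) := by
      rw [emb_insert, Finset.insert_comm]
    have h1 : (some i ∉ insert none (emb S) ∧ insert none (emb S) ∉ What ∧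
        insert (some i) (insert none (emb S)) ∈ What) ↔
        (i ∉ S ∧ S ∉ W ∧ insert i S ∈ W) := by
      rw [hinsert, mem_what_insert_none W What hWhat, mem_what_insert_none W What hWhat]
      simp [mem_emb]
    have h2 : (insert none (emb S) ∈ What ∨ some i ∈ insert none (emb S)) ↔
        (S ∈ W ∨ i ∈ S) := by
      rw [mem_what_insert_none W What hWhat]; simp [mem_emb]
    by_cases hc1 : i ∉ S ∧ S ∉ W ∧ insert i S ∈ W
    · rw [alphaMinus, if_pos (h1.2 hc1), alphaMinus, if_pos hc1]
    · by_cases hc2 : S ∈ W ∨ i ∈ S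
      · rw [alphaMinus, if_neg (fun h => hc1 (h1.1 h)), if_pos (h2.2 hc2),
          alphaMinus, if_neg hc1, if_pos hc2]
      · exfalso
        push_neg at hc2
        have : i ∈ Sᶜ := Finset.mem_compl.2 hc2.2
        have := Finset.card_pos.2 ⟨i, this⟩
        omega
  | succ m ih =>
    intro S hS
    have hinsert : insert (some i) (insert none (emb S)) = insert none (emb (insert i S)) := by
      rw [emb_insert, Finset.insert_comm]
    have h1 : (some i ∉ insert none (emb S) ∧ insert none (emb S) ∉ What ∧
        insert (some i) (insert none (emb S)) ∈ What) ↔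
        (i ∉ S ∧ S ∉ W ∧ insert i S ∈ W) := by
      rw [hinsert, mem_what_insert_none W What hWhat, mem_what_insert_none W What hWhat]
      simp [mem_emb]
    have h2 : (insert none (emb S) ∈ What ∨ some i ∈ insert none (emb S)) ↔
        (S ∈ W ∨ i ∈ S) := by
      rw [mem_what_insert_none W What hWhat]; simp [mem_emb]
    by_cases hc1 : i ∉ S ∧ S ∉ W ∧ insert i S ∈ W
    · rw [alphaMinus, if_pos (h1.2 hc1), alphaMinus, if_pos hc1]
    · by_cases hc2 : S ∈ W ∨ i ∈ S
      · rw [alphaMinus, if_neg (fun h => hc1 (h1.1 h)), if_pos (h2.2 hc2),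
          alphaMinus, if_neg hc1, if_pos hc2]
      · conv_rhs => rw [alphaMinus]
        rw [alphaMinus, if_neg (fun h => hc1 (h1.1 h)), if_neg (fun h => hc2 (h2.1 h)),
          if_neg hc1, if_neg hc2]
        rw [Finset.sum_attach _ (fun T => alphaMinus What (some i) T),
          Finset.sum_attach _ (fun T => alphaMinus W i T),
          LCloss_insert_none W What hWhat,
          Finset.sum_image (fun x _ y _ h => insert_none_emb_injective h),
          Finset.card_image_of_injective _ insert_none_emb_injective]
        congr 1
        apply Finset.sum_congr rfl
        intro T hT
        simp only [LCloss, Finset.mem_filter, Finset.mem_image] at hT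
        obtain ⟨⟨k, hk, rfl⟩, -⟩ := hT
        apply ih
        rw [Finset.compl_insert]
        have := Finset.card_erase_lt_of_mem hk
        omega

lemma alphaMinus_emb (i : β) (S : Finset β) :
    alphaMinus What (some i) (emb S) = alphaMinus W i S := by
  suffices h : ∀ m : ℕ, ∀ S : Finset β, Sᶜ.card ≤ m →
      alphaMinus What (some i) (emb S) = alphaMinus W i S from h _ S le_rfl
  intro m
  induction m with
  | zero =>
    intro S hS
    have h1 : (some i ∉ emb S ∧ emb S ∉ What ∧ insert (some i) (emb S) ∈ What) ↔
        (i ∉ S ∧ S ∉ W ∧ insert i S ∈ W) := by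
      rw [← emb_insert, mem_what_emb W What hWhat, mem_what_emb W What hWhat, mem_emb]
    have h2 : (emb S ∈ What ∨ some i ∈ emb S) ↔ (S ∈ W ∨ i ∈ S) := by
      rw [mem_what_emb W What hWhat, mem_emb]
    by_cases hc1 : i ∉ S ∧ S ∉ W ∧ insert i S ∈ W
    · rw [alphaMinus, if_pos (h1.2 hc1), alphaMinus, if_pos hc1]
    · by_cases hc2 : S ∈ W ∨ i ∈ S
      · rw [alphaMinus, if_neg (fun h => hc1 (h1.1 h)), if_pos (h2.2 hc2),
          alphaMinus, if_neg hc1, if_pos hc2]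
      · exfalso
        push_neg at hc2
        have : i ∈ Sᶜ := Finset.mem_compl.2 hc2.2
        have := Finset.card_pos.2 ⟨i, this⟩
        omega
  | succ m ih =>
    intro S hS
    have h1 : (some i ∉ emb S ∧ emb S ∉ What ∧ insert (some i) (emb S) ∈ What) ↔
        (i ∉ S ∧ S ∉ W ∧ insert i S ∈ W) := by
      rw [← emb_insert, mem_what_emb W What hWhat, mem_what_emb W What hWhat, mem_emb]
    have h2 : (emb S ∈ What ∨ some i ∈ emb S) ↔ (S ∈ W ∨ i ∈ S) := by
      rw [mem_what_emb W What hWhat, mem_emb]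
    by_cases hc1 : i ∉ S ∧ S ∉ W ∧ insert i S ∈ W
    · rw [alphaMinus, if_pos (h1.2 hc1), alphaMinus, if_pos hc1]
    · by_cases hc2 : S ∈ W ∨ i ∈ S
      · rw [alphaMinus, if_neg (fun h => hc1 (h1.1 h)), if_pos (h2.2 hc2),
          alphaMinus, if_neg hc1, if_pos hc2]
      · -- main case
        push_neg at hc2
        obtain ⟨hSW, hiS⟩ := hc2
        have hIW : insert i S ∉ W := by
          by_contra hIW
          exact hc1 ⟨hiS, hSW, hIW⟩
        have hmem : insert i S ∈ LCloss W S :=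
          Finset.mem_filter.2 ⟨Finset.mem_image.2 ⟨i, Finset.mem_compl.2 hiS, rfl⟩, hIW⟩
        have hm : 0 < (LCloss W S).card := Finset.card_pos.2 ⟨_, hmem⟩
        conv_lhs => rw [alphaMinus]
        rw [if_neg (fun h => hc1 (h1.1 h)),
          if_neg (fun h => (h2.1 h).elim (fun h' => hSW h') (fun h' => hiS h'))]
        rw [Finset.sum_attach _ (fun T => alphaMinus What (some i) T),
          LCloss_emb W What hWhat S hSW,
          Finset.sum_insert (insert_none_not_mem_image_emb S _),
          Finset.sum_image (fun x _ y _ h => emb_injective h),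
          Finset.card_insert_of_notMem (insert_none_not_mem_image_emb S _),
          Finset.card_image_of_injective _ emb_injective,
          alphaMinus_insert_none W What hWhat i S]
        have hval : ∑ T ∈ LCloss W S, alphaMinus What (some i) (emb T) =
            ∑ T ∈ LCloss W S, alphaMinus W i T := by
          apply Finset.sum_congr rfl
          intro T hT
          simp only [LCloss, Finset.mem_filter, Finset.mem_image] at hT
          obtain ⟨⟨k, hk, rfl⟩, -⟩ := hT
          apply ih
          rw [Finset.compl_insert]
          have := Finset.card_erase_lt_of_mem hk
          omega
        rw [hval]
        have ha : alphaMinus W i S =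
            (∑ T ∈ LCloss W S, alphaMinus W i T) / (LCloss W S).card := by
          rw [alphaMinus, if_neg hc1, if_neg (by push_neg; exact ⟨hSW, hiS⟩),
            Finset.sum_attach _ (fun T => alphaMinus W i T)]
        rw [ha]
        have hmr : (0:ℝ) < (LCloss W S).card := by exact_mod_cast hm
        field_simp
        push_cast
        ring
end Transfer2

lemma sum_option_split {β : Type*} [Fintype β] [DecidableEq β] (f : Finset (Option β) → ℝ) :
    ∑ T : Finset (Option β), f T =
      ∑ S : Finset β, (f (emb S) + f (insert none (emb S))) := by
  classical
  set φ : Finset β ⊕ Finset β → Finset (Option β) :=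
    Sum.elim (fun S => emb S) (fun S => insert none (emb S)) with hφ
  have hbij : Function.Bijective φ := by
    rw [Fintype.bijective_iff_injective_and_card]
    constructor
    · rintro (S | S) (T | T) h <;> simp only [hφ, Sum.elim_inl, Sum.elim_inr] at h
      · exact congrArg Sum.inl (emb_injective h)
      · exact absurd (h ▸ Finset.mem_insert_self none (emb T)) (none_not_mem_emb S)
      · exact absurd (h.symm ▸ Finset.mem_insert_self none (emb S)) (none_not_mem_emb T)
      · exact congrArg Sum.inr (insert_none_emb_injective h)
    · simp [Fintype.card_sum, Fintype.card_finset, Fintype.card_option, pow_succ]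
      ring
  rw [← Fintype.sum_bijective φ hbij (fun x => f (φ x)) f (fun x => rfl)]
  rw [Fintype.sum_sum_type]
  rw [← Finset.sum_add_distrib]
  rfl


/-- RM satisfies the dummy postulates (dum-1), (dum-2) and (dum-3). -/
theorem rm_dummy_postulates {n : ℕ} (W : Finset (Finset (Fin n)))
    (hW : SimpleVotingGame W) :
    (∀ d : Fin n, IsDummy W d → RM W d = 0) ∧
    (∀ i : Fin n, RM W i = 0 → IsDummy W i) ∧
    (∀ What : Finset (Finset (Option (Fin n))),
      What =
        W.image (fun S => S.image some) ∪ W.image (fun S => insert none (S.image some)) →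
      ∀ i : Fin n, RM What (some i) = RM W i) := by
  refine ⟨fun d hd => dum1 W d hd, fun i hi => dum2 W hW i hi, ?_⟩
  intro What hWhat i
  unfold RM
  have hcard : Fintype.card (Option (Fin n)) = n + 1 := by simp
  have hcard2 : Fintype.card (Fin n) = n := by simp
  rw [hcard, hcard2]
  rw [sum_option_split (alphaScore What (some i))]
  have key : ∀ S : Finset (Fin n), alphaScore What (some i) (emb S) +
      alphaScore What (some i) (insert none (emb S)) = 2 * alphaScore W i S := by
    intro S
    unfold alphaScore
    rw [alphaPlus_emb W What hWhat, alphaMinus_emb W What hWhat,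
      alphaPlus_insert_none W What hWhat, alphaMinus_insert_none W What hWhat]
    ring
  rw [Finset.sum_congr rfl (fun S _ => key S), ← Finset.mul_sum]
  rw [pow_succ]
  ring
end

section
/- In a simple voting game W on [n], suppose player j weakly dominates player i. Then for every subset S⊆[n] with i,j∉S, the YES-efficacy scores satisfy α⁺_i(S∪{i}) ≤ α⁺_j(S∪{j}) and α⁺_i(S∪{i,j}) ≤ α⁺_j(S∪{i,j}). -/
open Finset

variable {α : Type*} [Fintype α] [DecidableEq α]

section Helpers
variable {α : Type*} [Fintype α] [DecidableEq α]

lemma alphaPlus_le_one (W : Finset (Finset α)) (i : α) (S : Finset α) :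
    alphaPlus W i S ≤ 1 := by
  rw [alphaPlus]
  split_ifs
  · exact le_refl 1
  · norm_num
  · rcases eq_or_ne ((LCwin W S).card : ℝ) 0 with h0 | h0
    · rw [h0, div_zero]; norm_num
    · rw [div_le_one (lt_of_le_of_ne (by positivity) (Ne.symm h0))]
      calc ∑ T ∈ (LCwin W S).attach, alphaPlus W i T.1
          ≤ ∑ _T ∈ (LCwin W S).attach, (1 : ℝ) := by
            apply Finset.sum_le_sum
            intro T _
            exact alphaPlus_le_one W i T.1
        _ = (LCwin W S).card := by simp
termination_by S.card
decreasing_by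
  obtain ⟨T, hT⟩ := T
  simp only [LCwin, Finset.mem_filter, Finset.mem_image] at hT
  obtain ⟨⟨k, hk, rfl⟩, -⟩ := hT
  simpa using Finset.card_erase_lt_of_mem hk

lemma alphaPlus_of_notMem (W : Finset (Finset α)) {i : α} {S : Finset α} (h : i ∉ S) :
    alphaPlus W i S = 0 := by
  rw [alphaPlus, if_neg (fun hc => h hc.1), if_pos (Or.inr h)]

lemma alphaPlus_of_not_win (W : Finset (Finset α)) {i : α} {S : Finset α} (h : S ∉ W) :
    alphaPlus W i S = 0 := by
  rw [alphaPlus, if_neg (fun hc => h hc.2.1), if_pos (Or.inl h)]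

lemma alphaPlus_of_decisive (W : Finset (Finset α)) {i : α} {S : Finset α}
    (h1 : i ∈ S) (h2 : S ∈ W) (h3 : S.erase i ∉ W) : alphaPlus W i S = 1 := by
  rw [alphaPlus, if_pos ⟨h1, h2, h3⟩]

lemma LCwin_eq (W : Finset (Finset α)) (T : Finset α) :
    LCwin W T = (T.filter fun k => T.erase k ∈ W).image T.erase := by
  rw [LCwin, Finset.filter_image]

lemma alphaPlus_eq_avg (W : Finset (Finset α)) {i : α} {T : Finset α}
    (hi : i ∈ T) (hWT : T ∈ W) (hnd : T.erase i ∈ W) :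
    alphaPlus W i T =
      (∑ k ∈ T.filter (fun k => T.erase k ∈ W), alphaPlus W i (T.erase k)) /
        ((T.filter fun k => T.erase k ∈ W).card : ℝ) := by
  rw [alphaPlus, if_neg (fun hc => hc.2.2 hnd), if_neg (by push_neg; exact ⟨hWT, hi⟩)]
  rw [Finset.sum_attach (LCwin W T) (alphaPlus W i), LCwin_eq]
  rw [Finset.sum_image, Finset.card_image_of_injOn]
  · exact Set.InjOn.mono (fun x hx => Finset.mem_of_mem_filter x hx) (Finset.erase_injOn T)
  · intro x hx y hy hxy
    exact Finset.erase_injOn T (Finset.mem_of_mem_filter x hx) (Finset.mem_of_mem_filter y hy) hxy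

end Helpers

/-- weak dominance and YES-efficacy scores. -/
theorem dominance_alphaPlus {n : ℕ} (W : Finset (Finset (Fin n)))
    (hW : SimpleVotingGame W) (i j : Fin n)
    (hdom : WeaklyDominates W j i) :
    ∀ S : Finset (Fin n), i ∉ S → j ∉ S →
      alphaPlus W i (insert i S) ≤ alphaPlus W j (insert j S) ∧
      alphaPlus W i (insert i (insert j S)) ≤ alphaPlus W j (insert i (insert j S)) := by
  obtain ⟨hmono, -, -⟩ := hW
  rcases eq_or_ne i j with rfl | hij
  · exact fun S _ _ => ⟨le_rfl, le_rfl⟩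
  intro S
  induction S using Finset.strongInduction with
  | _ S IH =>
  intro hiS hjS
  have hji : j ≠ i := hij.symm
  have key_a : alphaPlus W i (insert i S) ≤ alphaPlus W j (insert j S) := by
    by_cases hWi : insert i S ∈ W
    · have hWj : insert j S ∈ W := hdom S hiS hjS hWi
      by_cases hS : S ∈ W
      · -- both winning, neither decisive: average case
        have hei : (insert i S).erase i = S := Finset.erase_insert hiS
        have hej : (insert j S).erase j = S := Finset.erase_insert hjS
        set A := S.filter (fun k => insert i (S.erase k) ∈ W) with hA
        set B := S.filter (fun k => insert j (S.erase k) ∈ W) with hB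
        have hAS : A ⊆ S := Finset.filter_subset _ _
        have hBS : B ⊆ S := Finset.filter_subset _ _
        have hiA : i ∉ A := fun h => hiS (hAS h)
        have hjB : j ∉ B := fun h => hjS (hBS h)
        have hFi : (insert i S).filter (fun k => (insert i S).erase k ∈ W)
            = insert i A := by
          rw [Finset.filter_insert, if_pos (by rwa [hei])]
          congr 1
          apply Finset.filter_congr
          intro k hk
          rw [Finset.erase_insert_of_ne (ne_of_mem_of_not_mem hk hiS).symm]
        have hFj : (insert j S).filter (fun k => (insert j S).erase k ∈ W)
            = insert j B := by
          rw [Finset.filter_insert, if_pos (by rwa [hej])]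
          congr 1
          apply Finset.filter_congr
          intro k hk
          rw [Finset.erase_insert_of_ne (ne_of_mem_of_not_mem hk hjS).symm]
        have hsum_i : alphaPlus W i (insert i S)
            = (∑ k ∈ A, alphaPlus W i (insert i (S.erase k))) / ((A.card : ℝ) + 1) := by
          rw [alphaPlus_eq_avg W (Finset.mem_insert_self i S) hWi (by rwa [hei]), hFi,
            Finset.sum_insert hiA, Finset.card_insert_of_notMem hiA, hei,
            alphaPlus_of_notMem W hiS, zero_add]
          push_cast
          congr 1
          apply Finset.sum_congr rfl
          intro k hk
          rw [Finset.erase_insert_of_ne (ne_of_mem_of_not_mem (hAS hk) hiS).symm]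
        have hsum_j : alphaPlus W j (insert j S)
            = (∑ k ∈ B, alphaPlus W j (insert j (S.erase k))) / ((B.card : ℝ) + 1) := by
          rw [alphaPlus_eq_avg W (Finset.mem_insert_self j S) hWj (by rwa [hej]), hFj,
            Finset.sum_insert hjB, Finset.card_insert_of_notMem hjB, hej,
            alphaPlus_of_notMem W hjS, zero_add]
          push_cast
          congr 1
          apply Finset.sum_congr rfl
          intro k hk
          rw [Finset.erase_insert_of_ne (ne_of_mem_of_not_mem (hBS hk) hjS).symm]
        have hAB : A ⊆ B := by
          intro k hk
          rw [hA, Finset.mem_filter] at hk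
          rw [hB, Finset.mem_filter]
          refine ⟨hk.1, hdom (S.erase k) (fun h => hiS (Finset.mem_of_mem_erase h))
            (fun h => hjS (Finset.mem_of_mem_erase h)) hk.2⟩
        set g := alphaPlus W j (insert j S) with hg
        have hg1 : g ≤ 1 := alphaPlus_le_one W j (insert j S)
        have h1 : ∑ k ∈ A, alphaPlus W i (insert i (S.erase k))
            ≤ ∑ k ∈ A, alphaPlus W j (insert j (S.erase k)) := by
          apply Finset.sum_le_sum
          intro k hk
          have hkS : k ∈ S := hAS hk
          exact (IH (S.erase k) (Finset.erase_ssubset hkS)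
            (fun h => hiS (Finset.mem_of_mem_erase h))
            (fun h => hjS (Finset.mem_of_mem_erase h))).1
        have h2 : ∑ k ∈ B \ A, alphaPlus W j (insert j (S.erase k))
            + ∑ k ∈ A, alphaPlus W j (insert j (S.erase k))
            = ∑ k ∈ B, alphaPlus W j (insert j (S.erase k)) := Finset.sum_sdiff hAB
        have h3 : ∑ k ∈ B \ A, alphaPlus W j (insert j (S.erase k))
            = ((B.card : ℝ) - A.card) := by
          rw [Finset.sum_congr rfl (fun k hk => ?_), Finset.sum_const, nsmul_eq_mul, mul_one,
            Finset.card_sdiff_of_subset hAB, Nat.cast_sub (Finset.card_le_card hAB)]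
          rw [Finset.mem_sdiff] at hk
          obtain ⟨hkB, hkA⟩ := hk
          rw [hB, Finset.mem_filter] at hkB
          have hkS : k ∈ S := hkB.1
          have hnotiw : insert i (S.erase k) ∉ W := by
            intro h
            exact hkA (by rw [hA, Finset.mem_filter]; exact ⟨hkS, h⟩)
          have hek : S.erase k ∉ W := fun h => hnotiw (hmono _ _ h (Finset.subset_insert _ _))
          exact alphaPlus_of_decisive W (Finset.mem_insert_self j _) hkB.2
            (by rwa [Finset.erase_insert (fun h => hjS (Finset.mem_of_mem_erase h))])
        have h4 : g * ((B.card : ℝ) + 1) = ∑ k ∈ B, alphaPlus W j (insert j (S.erase k)) := by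
          rw [hsum_j, div_mul_cancel₀]
          positivity
        have hABc : (A.card : ℝ) ≤ B.card := Nat.cast_le.mpr (Finset.card_le_card hAB)
        have h5 : g * ((B.card : ℝ) - A.card) ≤ (B.card : ℝ) - A.card :=
          mul_le_of_le_one_left (sub_nonneg.mpr hABc) hg1
        have hring : g * ((B.card : ℝ) + 1) - g * ((B.card : ℝ) - A.card)
            = g * ((A.card : ℝ) + 1) := by ring
        rw [hsum_i, div_le_iff₀ (by positivity)]
        linarith
      · have : alphaPlus W j (insert j S) = 1 :=
          alphaPlus_of_decisive W (Finset.mem_insert_self j S) hWj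
            (by rwa [Finset.erase_insert hjS])
        rw [this]
        exact alphaPlus_le_one W i _
    · rw [alphaPlus_of_not_win W hWi]
      exact alphaPlus_nonneg W j _
  refine ⟨key_a, ?_⟩
  set T := insert i (insert j S) with hT
  have hiT : i ∈ T := Finset.mem_insert_self i _
  have hjT : j ∈ T := Finset.mem_insert_of_mem (Finset.mem_insert_self j S)
  have hiS' : i ∉ insert j S := by simp [hij, hiS]
  have hjS' : j ∉ insert i S := by simp [hji, hjS]
  have heTi : T.erase i = insert j S := Finset.erase_insert hiS'
  have heTj : T.erase j = insert i S := by
    rw [hT, Finset.erase_insert_of_ne hij, Finset.erase_insert hjS]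
  by_cases hWT : T ∈ W
  · by_cases hWsi : insert i S ∈ W
    · have hWsj : insert j S ∈ W := hdom S hiS hjS hWsi
      rw [alphaPlus_eq_avg W hiT hWT (by rwa [heTi]),
          alphaPlus_eq_avg W hjT hWT (by rwa [heTj])]
      set C := S.filter (fun k => insert i (insert j (S.erase k)) ∈ W) with hC
      have hCS : C ⊆ S := Finset.filter_subset _ _
      have hjC : j ∉ C := fun h => hjS (hCS h)
      have hijC : i ∉ insert j C := by
        simp only [Finset.mem_insert]
        exact fun h => h.elim hij (fun h' => hiS (hCS h'))
      have hF : T.filter (fun k => T.erase k ∈ W) = insert i (insert j C) := by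
        rw [hT, Finset.filter_insert, if_pos (by rw [← hT, heTi]; exact hWsj)]
        congr 1
        rw [Finset.filter_insert, if_pos (by rw [← hT, heTj]; exact hWsi)]
        congr 1
        apply Finset.filter_congr
        intro k hk
        rw [← hT, hT, Finset.erase_insert_of_ne (ne_of_mem_of_not_mem hk hiS).symm,
          Finset.erase_insert_of_ne (ne_of_mem_of_not_mem hk hjS).symm]
      have hFpos : (0 : ℝ) < (T.filter (fun k => T.erase k ∈ W)).card := by
        rw [hF]
        push_cast [Finset.card_insert_of_notMem hijC]
        positivity
      rw [div_le_div_iff₀ hFpos hFpos]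
      apply mul_le_mul_of_nonneg_right ?_ (le_of_lt hFpos)
      rw [hF, Finset.sum_insert hijC, Finset.sum_insert hijC,
        Finset.sum_insert hjC, Finset.sum_insert hjC]
      have e1 : alphaPlus W i (T.erase i) = 0 := by
        rw [heTi]; exact alphaPlus_of_notMem W hiS'
      have e2 : alphaPlus W j (T.erase j) = 0 := by
        rw [heTj]; exact alphaPlus_of_notMem W hjS'
      have e3 : alphaPlus W i (T.erase j) ≤ alphaPlus W j (T.erase i) := by
        rw [heTi, heTj]; exact key_a
      have e4 : ∑ k ∈ C, alphaPlus W i (T.erase k) ≤ ∑ k ∈ C, alphaPlus W j (T.erase k) := by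
        apply Finset.sum_le_sum
        intro k hk
        have hkS : k ∈ S := hCS hk
        have hTe : T.erase k = insert i (insert j (S.erase k)) := by
          rw [hT, Finset.erase_insert_of_ne (ne_of_mem_of_not_mem hkS hiS).symm,
            Finset.erase_insert_of_ne (ne_of_mem_of_not_mem hkS hjS).symm]
        rw [hTe]
        exact (IH (S.erase k) (Finset.erase_ssubset hkS)
          (fun h => hiS (Finset.mem_of_mem_erase h))
          (fun h => hjS (Finset.mem_of_mem_erase h))).2
      linarith
    · rw [alphaPlus_of_decisive W hjT hWT (by rwa [heTj])]
      exact alphaPlus_le_one W i T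
  · rw [alphaPlus_of_not_win W hWT]
    exact alphaPlus_nonneg W j T
end

section
/- RM satisfies the dominance postulate: in a simple voting game W on [n], (dom-1) if player j weakly dominates player i then RM_i ≤ RM_j, and (dom-2) if player j strictly dominates player i then RM_i < RM_j. -/
open Finset

variable {α : Type*} [Fintype α] [DecidableEq α]

section AuxRM
variable {α : Type*} [Fintype α] [DecidableEq α]

/-- The image of a division under swapping players `i` and `j`. -/
def swD (i j : α) (S : Finset α) : Finset α := S.image (Equiv.swap i j)

lemma mem_swD {i j a : α} {S : Finset α} : a ∈ swD i j S ↔ Equiv.swap i j a ∈ S := by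
  constructor
  · rw [swD, mem_image]; rintro ⟨b, hb, rfl⟩; simpa
  · intro h; rw [swD, mem_image]; exact ⟨_, h, by simp⟩

lemma swD_swD (i j : α) (S : Finset α) : swD i j (swD i j S) = S := by
  ext a; simp [mem_swD]

lemma swD_insert (i j k : α) (S : Finset α) :
    swD i j (insert k S) = insert (Equiv.swap i j k) (swD i j S) :=
  image_insert _ _ _

lemma swD_erase (i j k : α) (S : Finset α) :
    swD i j (S.erase k) = (swD i j S).erase (Equiv.swap i j k) :=
  image_erase (Equiv.injective _) _ _

lemma mem_swD_left {i j : α} {S : Finset α} : i ∈ swD i j S ↔ j ∈ S := by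
  simp [mem_swD]

lemma mem_swD_right {i j : α} {S : Finset α} : j ∈ swD i j S ↔ i ∈ S := by
  simp [mem_swD]

lemma swD_eq_self_both {i j : α} {S : Finset α} (hi : i ∈ S) (hj : j ∈ S) :
    swD i j S = S := by
  ext a
  rw [mem_swD, Equiv.swap_apply_def]
  split_ifs with h1 h2 <;> simp_all

lemma swD_eq_self_neither {i j : α} {S : Finset α} (hi : i ∉ S) (hj : j ∉ S) :
    swD i j S = S := by
  ext a
  rw [mem_swD, Equiv.swap_apply_def]
  split_ifs with h1 h2 <;> simp_all

lemma swD_eq_insert {i j : α} {S : Finset α} (hi : i ∈ S) (hj : j ∉ S) :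
    swD i j S = insert j (S.erase i) := by
  have hij : i ≠ j := fun h => hj (h ▸ hi)
  ext a
  rw [mem_swD, Equiv.swap_apply_def]
  by_cases h1 : a = i <;> by_cases h2 : a = j <;> simp_all [Finset.mem_insert, hij.symm]


lemma mem_LCwin {W : Finset (Finset α)} {S T : Finset α} :
    T ∈ LCwin W S ↔ (∃ k ∈ S, S.erase k = T) ∧ T ∈ W := by
  simp [LCwin]

lemma mem_LCloss {W : Finset (Finset α)} {S T : Finset α} :
    T ∈ LCloss W S ↔ (∃ k ∈ Sᶜ, insert k S = T) ∧ T ∉ W := by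
  simp [LCloss]

lemma alphaPlus_eq_zero {W : Finset (Finset α)} {i : α} {S : Finset α}
    (h : S ∉ W ∨ i ∉ S) : alphaPlus W i S = 0 := by
  rw [alphaPlus, if_neg, if_pos h]; rintro ⟨h1, h2, h3⟩; tauto

lemma alphaPlus_eq_one {W : Finset (Finset α)} {i : α} {S : Finset α}
    (h1 : i ∈ S) (h2 : S ∈ W) (h3 : S.erase i ∉ W) : alphaPlus W i S = 1 := by
  rw [alphaPlus, if_pos ⟨h1, h2, h3⟩]

lemma alphaPlus_rec {W : Finset (Finset α)} {i : α} {S : Finset α}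
    (h1 : i ∈ S) (h2 : S ∈ W) (h3 : S.erase i ∈ W) :
    alphaPlus W i S = (∑ T ∈ LCwin W S, alphaPlus W i T) / (LCwin W S).card := by
  rw [alphaPlus, if_neg (by tauto), if_neg (by tauto), Finset.sum_attach]

lemma alphaMinus_eq_zero {W : Finset (Finset α)} {i : α} {S : Finset α}
    (h : S ∈ W ∨ i ∈ S) : alphaMinus W i S = 0 := by
  rw [alphaMinus, if_neg, if_pos h]; rintro ⟨h1, h2, h3⟩; tauto

lemma alphaMinus_eq_one {W : Finset (Finset α)} {i : α} {S : Finset α}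
    (h1 : i ∉ S) (h2 : S ∉ W) (h3 : insert i S ∈ W) : alphaMinus W i S = 1 := by
  rw [alphaMinus, if_pos ⟨h1, h2, h3⟩]

lemma alphaMinus_rec {W : Finset (Finset α)} {i : α} {S : Finset α}
    (h1 : i ∉ S) (h2 : S ∉ W) (h3 : insert i S ∉ W) :
    alphaMinus W i S = (∑ T ∈ LCloss W S, alphaMinus W i T) / (LCloss W S).card := by
  rw [alphaMinus, if_neg (by tauto), if_neg (by tauto), Finset.sum_attach]

lemma alphaMinus_le_one (W : Finset (Finset α)) (i : α) (S : Finset α) :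
    alphaMinus W i S ≤ 1 := by
  have key : ∀ n : ℕ, ∀ S : Finset α, Sᶜ.card ≤ n → alphaMinus W i S ≤ 1 := by
    intro n
    induction n with
    | zero =>
      intro S hS
      have hU : Sᶜ = ∅ := Finset.card_eq_zero.mp (Nat.le_zero.mp hS)
      have : S = univ := by rw [← compl_compl S, hU, compl_empty]
      subst this
      rw [alphaMinus_eq_zero (Or.inr (Finset.mem_univ i))]; norm_num
    | succ n ih =>
      intro S hS
      rw [alphaMinus]
      split
      · exact le_rfl
      split
      · norm_num
      · rw [Finset.sum_attach (LCloss W S) (alphaMinus W i)]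
        by_cases hC : (LCloss W S).card = 0
        · rw [Finset.card_eq_zero.mp hC]; simp
        · rw [div_le_one (by positivity)]
          calc ∑ T ∈ LCloss W S, alphaMinus W i T ≤ ∑ T ∈ LCloss W S, 1 := by
                apply Finset.sum_le_sum
                intro T hT
                obtain ⟨⟨k, hk, rfl⟩, -⟩ := mem_LCloss.mp hT
                apply ih
                rw [Finset.compl_insert, Finset.card_erase_of_mem hk]
                omega
            _ = (LCloss W S).card := by simp
  exact key Sᶜ.card S le_rfl

/-- Abstract mean-comparison lemma. -/
lemma mean_le_mean {β : Type*} [DecidableEq β] (C C' : Finset β) (f g : β → ℝ)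
    (φ : β → β)
    (hmap : ∀ T ∈ C, φ T ∈ C')
    (hinj : ∀ T₁ ∈ C, ∀ T₂ ∈ C, φ T₁ = φ T₂ → T₁ = T₂)
    (hfg : ∀ T ∈ C, f T ≤ g (φ T))
    (hf1 : ∀ T ∈ C, f T ≤ 1)
    (hg0 : ∀ T ∈ C', 0 ≤ g T)
    (hg1 : ∀ T' ∈ C', T' ∉ C.image φ → g T' = 1) :
    (∑ T ∈ C, f T) / C.card ≤ (∑ T ∈ C', g T) / C'.card := by
  rcases Finset.eq_empty_or_nonempty C with rfl | hC
  · simp only [Finset.sum_empty, Finset.card_empty, Nat.cast_zero, div_zero]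
    exact div_nonneg (Finset.sum_nonneg hg0) (Nat.cast_nonneg _)
  have himsub : C.image φ ⊆ C' := by
    intro x hx
    obtain ⟨T, hT, rfl⟩ := Finset.mem_image.mp hx
    exact hmap T hT
  have hcardim : (C.image φ).card = C.card := Finset.card_image_of_injOn hinj
  have hm : 0 < C.card := Finset.card_pos.mpr hC
  have hM : 0 < C'.card := lt_of_lt_of_le (hcardim ▸ hm) (Finset.card_le_card himsub)
  have hmM : C.card ≤ C'.card := hcardim ▸ Finset.card_le_card himsub
  have hsplit : ∑ T ∈ C', g T = (∑ T ∈ C.image φ, g T) + ∑ T ∈ C' \ C.image φ, g T := by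
    rw [Finset.sum_sdiff_eq_sub himsub]; ring
  have him : ∑ T ∈ C.image φ, g T = ∑ T ∈ C, g (φ T) := Finset.sum_image hinj
  have hfsum : ∑ T ∈ C, f T ≤ ∑ T ∈ C, g (φ T) := Finset.sum_le_sum hfg
  have hextra : ∑ T ∈ C' \ C.image φ, g T = (C'.card - C.card : ℝ) := by
    rw [Finset.sum_congr rfl (fun T hT => hg1 T (Finset.mem_sdiff.mp hT).1 (Finset.mem_sdiff.mp hT).2)]
    rw [Finset.sum_const, Finset.card_sdiff_of_subset himsub, hcardim, nsmul_eq_mul, mul_one,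
      Nat.cast_sub hmM]
  have hflecard : ∑ T ∈ C, f T ≤ C.card := by
    calc ∑ T ∈ C, f T ≤ ∑ T ∈ C, 1 := Finset.sum_le_sum hf1
      _ = C.card := by simp
  have hf0 : 0 ≤ ∑ T ∈ C', g T := Finset.sum_nonneg hg0
  rw [div_le_div_iff₀ (by positivity) (by positivity)]
  have h1 : (∑ T ∈ C, f T) * C'.card ≤ (∑ T ∈ C, f T) * C.card + ((C'.card : ℝ) - C.card) * C.card := by
    have : ((C.card : ℝ)) ≤ C'.card := by exact_mod_cast hmM
    nlinarith [hflecard]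
  calc (∑ T ∈ C, f T) * C'.card
      ≤ (∑ T ∈ C, f T) * C.card + ((C'.card : ℝ) - C.card) * C.card := h1
    _ = ((∑ T ∈ C, f T) + ((C'.card : ℝ) - C.card)) * C.card := by ring
    _ ≤ ((∑ T ∈ C, g (φ T)) + ((C'.card : ℝ) - C.card)) * C.card := by
        apply mul_le_mul_of_nonneg_right _ (by positivity)
        linarith
    _ = (∑ T ∈ C', g T) * C.card := by rw [hsplit, him, hextra]

variable {W : Finset (Finset α)} {i j : α}

lemma swD_comm (i j : α) (S : Finset α) : swD i j S = swD j i S := by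
  rw [swD, swD, Equiv.swap_comm]

lemma swD_mem_W (dom : WeaklyDominates W j i) {S : Finset α}
    (hS : S ∈ W) (hi : i ∈ S) : swD i j S ∈ W := by
  by_cases hj : j ∈ S
  · rw [swD_eq_self_both hi hj]; exact hS
  · rw [swD_eq_insert hi hj]
    exact dom (S.erase i) (Finset.notMem_erase i S)
      (fun h => hj (Finset.mem_of_mem_erase h))
      (by rw [Finset.insert_erase hi]; exact hS)

lemma swD_notMem_W (dom : WeaklyDominates W j i) {S : Finset α}
    (hS : S ∉ W) (hi : i ∉ S) : swD i j S ∉ W := by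
  by_cases hj : j ∈ S
  · rw [swD_comm, swD_eq_insert hj hi]
    intro hw
    apply hS
    have := dom (S.erase j) (fun h => hi (Finset.mem_of_mem_erase h))
      (Finset.notMem_erase j S) hw
    rwa [Finset.insert_erase hj] at this
  · rw [swD_eq_self_neither hi hj]; exact hS

lemma alphaPlus_swD_le (hmono : ∀ S T : Finset α, S ∈ W → S ⊆ T → T ∈ W)
    (dom : WeaklyDominates W j i) (S : Finset α) :
    alphaPlus W i S ≤ alphaPlus W j (swD i j S) := by
  have key : ∀ n : ℕ, ∀ S : Finset α, S.card ≤ n →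
      alphaPlus W i S ≤ alphaPlus W j (swD i j S) := by
    intro n
    induction n with
    | zero =>
      intro S hS
      have : S = ∅ := Finset.card_eq_zero.mp (Nat.le_zero.mp hS)
      subst this
      rw [alphaPlus_eq_zero (Or.inr (Finset.notMem_empty i))]
      exact alphaPlus_nonneg W j _
    | succ n ih =>
      intro S hS
      by_cases hiS : i ∈ S
      swap
      · rw [alphaPlus_eq_zero (Or.inr hiS)]; exact alphaPlus_nonneg W j _
      by_cases hSW : S ∈ W
      swap
      · rw [alphaPlus_eq_zero (Or.inl hSW)]; exact alphaPlus_nonneg W j _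
      have hjsw : j ∈ swD i j S := mem_swD_right.mpr hiS
      have hswW : swD i j S ∈ W := swD_mem_W dom hSW hiS
      have herase : swD i j (S.erase i) = (swD i j S).erase j := by
        rw [swD_erase, Equiv.swap_apply_left]
      by_cases hdec : S.erase i ∈ W
      swap
      · -- i decisive in S, so j decisive in swD i j S
        rw [alphaPlus_eq_one hiS hSW hdec,
          alphaPlus_eq_one hjsw hswW (herase ▸ swD_notMem_W dom hdec (Finset.notMem_erase i S))]
      by_cases hjdec : (swD i j S).erase j ∈ W
      swap
      · rw [alphaPlus_eq_one hjsw hswW hjdec]; exact alphaPlus_le_one W i S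
      rw [alphaPlus_rec hiS hSW hdec, alphaPlus_rec hjsw hswW hjdec]
      apply mean_le_mean _ _ _ _ (fun T => if swD i j T ∈ W then swD i j T else T)
      · -- map
        intro T hT
        obtain ⟨⟨k, hk, rfl⟩, hTW⟩ := mem_LCwin.mp hT
        by_cases hsw : swD i j (S.erase k) ∈ W
        · simp only [if_pos hsw]
          exact mem_LCwin.mpr ⟨⟨Equiv.swap i j k, mem_swD.mpr (by simpa using hk),
            (swD_erase i j k S).symm⟩, hsw⟩
        · simp only [if_neg hsw]
          have hki : i = k := by
            by_contra hne
            exact hsw (swD_mem_W dom hTW (Finset.mem_erase.mpr ⟨hne, hiS⟩))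
          subst hki
          refine mem_LCwin.mpr ⟨?_, hTW⟩
          by_cases hjS : j ∈ S
          · exact ⟨i, mem_swD_left.mpr hjS, by rw [swD_eq_self_both hiS hjS]⟩
          · exact ⟨j, hjsw, by
              rw [swD_eq_insert hiS hjS, Finset.erase_insert
                (fun h => hjS (Finset.mem_of_mem_erase h))]⟩
      · -- inj
        intro T₁ h₁ T₂ h₂ heq
        have h₁W : T₁ ∈ W := (mem_LCwin.mp h₁).2
        have h₂W : T₂ ∈ W := (mem_LCwin.mp h₂).2
        split_ifs at heq with c1 c2 c2
        · rw [← swD_swD i j T₁, heq, swD_swD]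
        · exact absurd (by rw [← heq, swD_swD]; exact h₁W) c2
        · exact absurd (by rw [heq, swD_swD]; exact h₂W) c1
        · exact heq
      · -- fg
        intro T hT
        obtain ⟨⟨k, hk, rfl⟩, hTW⟩ := mem_LCwin.mp hT
        by_cases hsw : swD i j (S.erase k) ∈ W
        · rw [if_pos hsw]
          exact ih _ (by rw [Finset.card_erase_of_mem hk]; omega)
        · rw [if_neg hsw]
          have hiT : i ∉ S.erase k := fun h => hsw (swD_mem_W dom hTW h)
          rw [alphaPlus_eq_zero (Or.inr hiT)]
          exact alphaPlus_nonneg W j _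
      · intro T hT; exact alphaPlus_le_one W i T
      · intro T hT; exact alphaPlus_nonneg W j T
      · -- extras are decisive
        intro T' hT' hnim
        obtain ⟨⟨k', hk', rfl⟩, hT'W⟩ := mem_LCwin.mp hT'
        set k := Equiv.swap i j k' with hkdef
        have hkS : k ∈ S := mem_swD.mp hk'
        have hswk : swD i j (S.erase k) = (swD i j S).erase k' := by
          rw [swD_erase, hkdef, Equiv.swap_apply_self]
        by_cases hTW : S.erase k ∈ W
        · exfalso
          apply hnim
          refine Finset.mem_image.mpr ⟨S.erase k, mem_LCwin.mpr ⟨⟨k, hkS, rfl⟩, hTW⟩, ?_⟩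
          rw [if_pos (hswk ▸ hT'W), hswk]
        · have hjk' : j ≠ k' := by
            intro h
            apply hTW
            have : k = i := by rw [hkdef, ← h, Equiv.swap_apply_right]
            rwa [this]
          apply alphaPlus_eq_one (Finset.mem_erase.mpr ⟨hjk', hjsw⟩) hT'W
          have : ((swD i j S).erase k').erase j = swD i j ((S.erase k).erase i) := by
            rw [swD_erase, Equiv.swap_apply_left, hswk]
          rw [this]
          apply swD_notMem_W dom _ (Finset.notMem_erase i _)
          intro h
          exact hTW (hmono _ _ h (Finset.erase_subset i _))
  exact key S.card S le_rfl

lemma alphaMinus_swD_le (hmono : ∀ S T : Finset α, S ∈ W → S ⊆ T → T ∈ W)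
    (dom : WeaklyDominates W j i) (S : Finset α) :
    alphaMinus W i S ≤ alphaMinus W j (swD i j S) := by
  have key : ∀ n : ℕ, ∀ S : Finset α, Sᶜ.card ≤ n →
      alphaMinus W i S ≤ alphaMinus W j (swD i j S) := by
    intro n
    induction n with
    | zero =>
      intro S hS
      have hU : Sᶜ = ∅ := Finset.card_eq_zero.mp (Nat.le_zero.mp hS)
      have : S = univ := by rw [← compl_compl S, hU, compl_empty]
      subst this
      rw [alphaMinus_eq_zero (Or.inr (Finset.mem_univ i))]
      exact alphaMinus_nonneg W j _
    | succ n ih =>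
      intro S hS
      by_cases hiS : i ∈ S
      · rw [alphaMinus_eq_zero (Or.inr hiS)]; exact alphaMinus_nonneg W j _
      by_cases hSW : S ∈ W
      · rw [alphaMinus_eq_zero (Or.inl hSW)]; exact alphaMinus_nonneg W j _
      have hjsw : j ∉ swD i j S := fun h => hiS (mem_swD_right.mp h)
      have hswW : swD i j S ∉ W := swD_notMem_W dom hSW hiS
      have hins : swD i j (insert i S) = insert j (swD i j S) := by
        rw [swD_insert, Equiv.swap_apply_left]
      by_cases hdec : insert i S ∈ W
      · rw [alphaMinus_eq_one hiS hSW hdec,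
          alphaMinus_eq_one hjsw hswW (hins ▸ swD_mem_W dom hdec (Finset.mem_insert_self i S))]
      by_cases hjdec : insert j (swD i j S) ∈ W
      · rw [alphaMinus_eq_one hjsw hswW hjdec]; exact alphaMinus_le_one W i S
      rw [alphaMinus_rec hiS hSW hdec, alphaMinus_rec hjsw hswW hjdec]
      apply mean_le_mean _ _ _ _ (fun T => if swD i j T ∉ W then swD i j T else T)
      · -- map
        intro T hT
        obtain ⟨⟨k, hk, rfl⟩, hTW⟩ := mem_LCloss.mp hT
        have hkS : k ∉ S := Finset.mem_compl.mp hk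
        by_cases hsw : swD i j (insert k S) ∉ W
        · simp only [if_pos hsw]
          refine mem_LCloss.mpr ⟨⟨Equiv.swap i j k, ?_, (swD_insert i j k S).symm⟩, hsw⟩
          rw [Finset.mem_compl]
          intro h
          exact hkS (by simpa using mem_swD.mp h)
        · simp only [if_neg hsw]
          push_neg at hsw
          have hiT : i ∈ insert k S := by
            by_contra h
            exact swD_notMem_W dom hTW h hsw
          have hki : i = k := by
            rcases Finset.mem_insert.mp hiT with h | h
            · exact h
            · exact absurd h hiS
          subst hki
          refine mem_LCloss.mpr ⟨?_, hTW⟩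
          by_cases hjS : j ∈ S
          · refine ⟨j, Finset.mem_compl.mpr hjsw, ?_⟩
            rw [swD_comm, swD_eq_insert hjS hiS, Finset.insert_comm,
              Finset.insert_erase hjS]
          · refine ⟨i, ?_, by rw [swD_eq_self_neither hiS hjS]⟩
            rw [Finset.mem_compl, swD_eq_self_neither hiS hjS]
            exact hiS
      · -- inj
        intro T₁ h₁ T₂ h₂ heq
        have h₁W : T₁ ∉ W := (mem_LCloss.mp h₁).2
        have h₂W : T₂ ∉ W := (mem_LCloss.mp h₂).2
        by_cases c1 : swD i j T₁ ∉ W <;> by_cases c2 : swD i j T₂ ∉ W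
        · rw [if_pos c1, if_pos c2] at heq
          rw [← swD_swD i j T₁, heq, swD_swD]
        · rw [if_pos c1, if_neg c2] at heq
          push_neg at c2
          exfalso
          rw [← heq, swD_swD] at c2
          exact h₁W c2
        · rw [if_neg c1, if_pos c2] at heq
          push_neg at c1
          exfalso
          rw [heq, swD_swD] at c1
          exact h₂W c1
        · rw [if_neg c1, if_neg c2] at heq
          exact heq
      · -- fg
        intro T hT
        obtain ⟨⟨k, hk, rfl⟩, hTW⟩ := mem_LCloss.mp hT
        by_cases hsw : swD i j (insert k S) ∉ W
        · rw [if_pos hsw]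
          apply ih
          rw [Finset.compl_insert, Finset.card_erase_of_mem hk]
          omega
        · rw [if_neg hsw]
          push_neg at hsw
          have hiT : i ∈ insert k S := by
            by_contra h
            exact swD_notMem_W dom hTW h hsw
          rw [alphaMinus_eq_zero (Or.inr hiT)]
          exact alphaMinus_nonneg W j _
      · intro T hT; exact alphaMinus_le_one W i T
      · intro T hT; exact alphaMinus_nonneg W j T
      · -- extras are decisive
        intro T' hT' hnim
        obtain ⟨⟨k', hk', rfl⟩, hT'W⟩ := mem_LCloss.mp hT'
        have hk'sw : k' ∉ swD i j S := Finset.mem_compl.mp hk'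
        set k := Equiv.swap i j k' with hkdef
        have hkS : k ∉ S := fun h => hk'sw (mem_swD.mpr h)
        have hswk : swD i j (insert k S) = insert k' (swD i j S) := by
          rw [swD_insert, hkdef, Equiv.swap_apply_self]
        by_cases hTW : insert k S ∈ W
        swap
        · exfalso
          apply hnim
          refine Finset.mem_image.mpr ⟨insert k S,
            mem_LCloss.mpr ⟨⟨k, Finset.mem_compl.mpr hkS, rfl⟩, hTW⟩, ?_⟩
          rw [if_pos (hswk ▸ hT'W), hswk]
        · have hjk' : j ≠ k' := by
            intro h
            apply hdec
            have hki : k = i := by rw [hkdef, ← h, Equiv.swap_apply_right]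
            rwa [hki] at hTW
          apply alphaMinus_eq_one (fun h => (Finset.mem_insert.mp h).elim hjk' hjsw) hT'W
          have h2 : insert j (insert k' (swD i j S)) = swD i j (insert i (insert k S)) := by
            rw [swD_insert, Equiv.swap_apply_left, hswk]
          rw [h2]
          exact swD_mem_W dom (hmono _ _ hTW (Finset.subset_insert i _))
            (Finset.mem_insert_self i _)
  exact key Sᶜ.card S le_rfl

lemma alphaScore_swD_le (hmono : ∀ S T : Finset α, S ∈ W → S ⊆ T → T ∈ W)
    (dom : WeaklyDominates W j i) (S : Finset α) :
    alphaScore W i S ≤ alphaScore W j (swD i j S) :=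
  add_le_add (alphaPlus_swD_le hmono dom S) (alphaMinus_swD_le hmono dom S)

lemma sum_alphaScore_swD (W : Finset (Finset α)) (i j : α) :
    ∑ S : Finset α, alphaScore W j (swD i j S) = ∑ S : Finset α, alphaScore W j S := by
  have hinv : Function.Involutive (swD i j) := swD_swD i j
  exact Fintype.sum_bijective (swD i j) hinv.bijective _ _ (fun S => rfl)

end AuxRM

/-- RM satisfies the dominance postulate (dom-1) and (dom-2). -/
theorem rm_dominance {n : ℕ} (W : Finset (Finset (Fin n)))
    (hW : SimpleVotingGame W) (i j : Fin n) :
    (WeaklyDominates W j i → RM W i ≤ RM W j) ∧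
    (WeaklyDominates W j i ∧ ¬ WeaklyDominates W i j → RM W i < RM W j) := by
  obtain ⟨hmono, hempty, huniv⟩ := hW
  have hpos : (0 : ℝ) < 1 / 2 ^ Fintype.card (Fin n) := by positivity
  constructor
  · intro dom
    unfold RM
    apply mul_le_mul_of_nonneg_left _ hpos.le
    calc ∑ S : Finset (Fin n), alphaScore W i S
        ≤ ∑ S : Finset (Fin n), alphaScore W j (swD i j S) :=
          Finset.sum_le_sum (fun S _ => alphaScore_swD_le hmono dom S)
      _ = ∑ S : Finset (Fin n), alphaScore W j S := sum_alphaScore_swD W i j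
  · rintro ⟨dom, hnd⟩
    unfold RM
    apply mul_lt_mul_of_pos_left _ hpos
    rw [← sum_alphaScore_swD W i j]
    simp only [WeaklyDominates, not_forall] at hnd
    obtain ⟨S₀, hjS₀, hiS₀, hjW, hiW⟩ := hnd
    apply Finset.sum_lt_sum (fun S _ => alphaScore_swD_le hmono dom S)
    refine ⟨insert i S₀, Finset.mem_univ _, ?_⟩
    have hij : i ≠ j := by
      rintro rfl
      exact hiW hjW
    have hjS₁ : j ∉ insert i S₀ := by
      rw [Finset.mem_insert]
      rintro (h | h)
      · exact hij h.symm
      · exact hjS₀ h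
    have hswd : swD i j (insert i S₀) = insert j S₀ := by
      rw [swD_eq_insert (Finset.mem_insert_self i S₀) hjS₁,
        Finset.erase_insert hiS₀]
    have hscore1 : alphaScore W i (insert i S₀) = 0 := by
      unfold alphaScore
      rw [alphaPlus_eq_zero (Or.inl hiW),
        alphaMinus_eq_zero (Or.inr (Finset.mem_insert_self i S₀))]
      norm_num
    have hS₀W : S₀ ∉ W := fun h => hiW (hmono _ _ h (Finset.subset_insert i S₀))
    have hscore2 : (1 : ℝ) ≤ alphaScore W j (swD i j (insert i S₀)) := by
      rw [hswd]
      unfold alphaScore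
      rw [alphaPlus_eq_one (Finset.mem_insert_self j S₀) hjW
        (by rwa [Finset.erase_insert hjS₀])]
      have := alphaMinus_nonneg W j (insert j S₀)
      linarith
    rw [hscore1]
    linarith
end
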